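/- arXiv:2209.06630 — 3 statements merged into one kernel-verified Lean document; each statement's English description precedes it below -/
import Mathlib

section
/- Let Φ be a Banach function space over (ℝ, dt) such that the Hardy–Littlewood maximal operator M is bounded on Φ and on its Köthe dual Φ'. Let p ∈ (1,∞). For g ∈ Φ with g ≠ 0 and h ∈ Φ' with h ≠ 0, define w := (ℛg)^{1−p} · ℛ'h, where ℛ and ℛ' are the Rubio de Francia iteration operators built from M on Φ and Φ' respectively. Then w is a Muckenhoupt A_p weight with [w]_{A_p} ≤ 2^p ‖M‖_Φ^{p−1} ‖M‖_{Φ'}. -/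
open MeasureTheory Filter Topology
open scoped ENNReal NNReal

noncomputable section

/-- The (uncentered) Hardy–Littlewood maximal operator on `ℝ`. -/
def HLM (g : ℝ → ℝ) (x : ℝ) : ℝ :=
  sSup {r : ℝ | ∃ a b : ℝ, a < b ∧ x ∈ Set.Icc a b ∧
    r = (b - a)⁻¹ * ∫ t in Set.Ioc a b, |g t|}

/-- A Banach function space over `(ℝ, dt)`: an order ideal of `L⁰` with a lattice norm
and the Fatou property. -/
structure BFS where
  Mem : (ℝ → ℝ) → Prop
  N : (ℝ → ℝ) → ℝ
  mem_meas : ∀ f, Mem f → AEStronglyMeasurable f volume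
  mem_congr : ∀ f g, Mem f → f =ᵐ[volume] g → Mem g
  norm_congr : ∀ f g, f =ᵐ[volume] g → N f = N g
  norm_nonneg' : ∀ f, 0 ≤ N f
  norm_eq_zero' : ∀ f, Mem f → (N f = 0 ↔ f =ᵐ[volume] (fun _ => (0:ℝ)))
  add_mem : ∀ f g, Mem f → Mem g → Mem (f + g)
  norm_add_le' : ∀ f g, Mem f → Mem g → N (f + g) ≤ N f + N g
  smul_mem : ∀ (c : ℝ) (f), Mem f → Mem (c • f)
  norm_smul' : ∀ (c : ℝ) (f), N (c • f) = |c| * N f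
  ideal : ∀ f g, AEStronglyMeasurable f volume → Mem g →
    (∀ᵐ t ∂volume, |f t| ≤ |g t|) → Mem f
  ideal_norm : ∀ f g, Mem f → Mem g → (∀ᵐ t ∂volume, |f t| ≤ |g t|) → N f ≤ N g
  fatou : ∀ (u : ℕ → ℝ → ℝ) (f : ℝ → ℝ) (c : ℝ),
    (∀ n, Mem (u n)) → (∀ n, N (u n) ≤ c) →
    (∀ n, ∀ᵐ t ∂volume, 0 ≤ u n t ∧ u n t ≤ u (n + 1) t) →
    (∀ᵐ t ∂volume, Tendsto (fun n => u n t) atTop (𝓝 (f t))) →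
    Mem f ∧ N f ≤ c

/-- Membership in the Köthe dual `Φ'` of a Banach function space. -/
def kMem (Φ : BFS) (g : ℝ → ℝ) : Prop :=
  AEStronglyMeasurable g volume ∧ ∀ f, Φ.Mem f → Integrable (fun t => f t * g t) volume

/-- Norm in the Köthe dual `Φ'` of a Banach function space. -/
def kN (Φ : BFS) (g : ℝ → ℝ) : ℝ :=
  sSup {r : ℝ | ∃ f, Φ.Mem f ∧ Φ.N f ≤ 1 ∧ r = ∫ t, |f t * g t|}

/-- The Hardy–Littlewood maximal operator is bounded, with constant `C`, on the
(abstract) function space described by the membership predicate `Mem` and norm `Nn`. -/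
def MBoundedOn (Mem : (ℝ → ℝ) → Prop) (Nn : (ℝ → ℝ) → ℝ) (C : ℝ) : Prop :=
  ∀ f, Mem f → Mem (HLM f) ∧ Nn (HLM f) ≤ C * Nn f

/-- The Rubio de Francia iteration operator `ℛg = ∑ₖ Mᵏ|g| / (2C)ᵏ`, built from the
Hardy–Littlewood maximal operator, where `C` is a bound for `M` on the space at hand. -/
def RdF (C : ℝ) (g : ℝ → ℝ) : ℝ → ℝ :=
  fun t => ∑' k : ℕ, (fun h => HLM h)^[k] (fun s => |g s|) t / (2 * C) ^ k

/-- `w` is a Muckenhoupt `A₁` weight with `A₁`-constant at most `c`. -/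
def IsA1 (w : ℝ → ℝ) (c : ℝ) : Prop :=
  (∀ᵐ t ∂volume, 0 < w t) ∧ ∀ᵐ t ∂volume, HLM w t ≤ c * w t

/-- The `A_p` ratio of a weight `w` over the interval `(a, b)`. -/
def apRatio (p : ℝ) (w : ℝ → ℝ) (a b : ℝ) : ℝ :=
  ((b - a)⁻¹ * ∫ t in Set.Ioc a b, w t) *
    ((b - a)⁻¹ * ∫ t in Set.Ioc a b, (w t) ^ (-(p - 1)⁻¹)) ^ (p - 1)

/-- `w` is a Muckenhoupt `A_p` weight with `[w]_{A_p} ≤ c`. -/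
def IsAp (p : ℝ) (w : ℝ → ℝ) (c : ℝ) : Prop :=
  (∀ᵐ t ∂volume, 0 < w t) ∧ LocallyIntegrable w volume ∧
    ∀ a b : ℝ, a < b → apRatio p w a b ≤ c

namespace BFS
/-- Property (P4) of Bennett–Sharpley: characteristic functions of finite-measure sets
belong to `Φ`. Property (P5): `∫_E |f| ≤ C_E ‖f‖_Φ`. -/
structure IsBS (Φ : BFS) : Prop where
  indicator_mem : ∀ E : Set ℝ, MeasurableSet E → volume E < ⊤ →
    Φ.Mem (Set.indicator E fun _ => (1:ℝ))
  loc_int : ∀ E : Set ℝ, MeasurableSet E → volume E < ⊤ →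
    ∃ Ce : ℝ, ∀ f, Φ.Mem f → IntegrableOn f E volume ∧ ∫ t in E, |f t| ≤ Ce * Φ.N f
end BFS

section Aux
open Set MeasureTheory

/-- The set of averages of `|f|` over intervals containing `x`. -/
def avset (f : ℝ → ℝ) (x : ℝ) : Set ℝ :=
  {r : ℝ | ∃ a b : ℝ, a < b ∧ x ∈ Set.Icc a b ∧
    r = (b - a)⁻¹ * ∫ t in Set.Ioc a b, |f t|}

lemma HLM_eq_sSup (f : ℝ → ℝ) (x : ℝ) : HLM f x = sSup (avset f x) := rfl

lemma avset_nonneg {f : ℝ → ℝ} {x : ℝ} : ∀ r ∈ avset f x, 0 ≤ r := by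
  rintro r ⟨a, b, hab, hx, rfl⟩
  have h1 : 0 ≤ ∫ t in Set.Ioc a b, |f t| :=
    setIntegral_nonneg measurableSet_Ioc (fun t _ => abs_nonneg _)
  have h2 : (0:ℝ) ≤ (b - a)⁻¹ := inv_nonneg.2 (sub_nonneg.2 hab.le)
  exact mul_nonneg h2 h1

lemma HLM_nonneg (f : ℝ → ℝ) (x : ℝ) : 0 ≤ HLM f x :=
  Real.sSup_nonneg avset_nonneg

lemma le_HLM {f : ℝ → ℝ} {x : ℝ} (hB : BddAbove (avset f x)) {a b : ℝ}
    (hab : a < b) (hx : x ∈ Set.Icc a b) :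
    (b - a)⁻¹ * ∫ t in Set.Ioc a b, |f t| ≤ HLM f x :=
  le_csSup hB ⟨a, b, hab, hx, rfl⟩

/-- The decay weight `(2|t|+3)⁻¹`. -/
def mwt (t : ℝ) : ℝ := (2 * |t| + 3)⁻¹

lemma mwt_pos (t : ℝ) : 0 < mwt t := by
  have : (0:ℝ) < 2 * |t| + 3 := by positivity
  exact inv_pos.2 this

lemma mwt_continuous : Continuous mwt := by
  apply Continuous.inv₀
  · fun_prop
  · intro t; positivity

/-- The unit indicator. -/
def indOI : ℝ → ℝ := Set.indicator (Set.Ioc (0:ℝ) 1) (fun _ => (1:ℝ))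

lemma indOI_integral (a b : ℝ) :
    ∫ t in Set.Ioc a b, |indOI t| = (volume (Set.Ioc (0:ℝ) 1 ∩ Set.Ioc a b)).toReal := by
  have h0 : ∀ t, |indOI t| = indOI t := by
    intro t
    apply abs_of_nonneg
    unfold indOI
    exact Set.indicator_nonneg (fun _ _ => zero_le_one) t
  simp_rw [h0]
  unfold indOI
  rw [setIntegral_indicator measurableSet_Ioc]
  rw [Set.inter_comm]
  simp
  rfl

lemma avset_indOI_bddAbove (x : ℝ) : BddAbove (avset indOI x) := by
  refine ⟨1, ?_⟩
  rintro r ⟨a, b, hab, hx, rfl⟩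
  rw [indOI_integral]
  have h1 : volume (Set.Ioc (0:ℝ) 1 ∩ Set.Ioc a b) ≤ volume (Set.Ioc a b) :=
    measure_mono Set.inter_subset_right
  rw [Real.volume_Ioc] at h1
  have h2 : (volume (Set.Ioc (0:ℝ) 1 ∩ Set.Ioc a b)).toReal ≤ b - a := by
    refine le_trans (ENNReal.toReal_mono (by simp) h1) ?_
    rw [ENNReal.toReal_ofReal (sub_nonneg.2 hab.le)]
  calc (b - a)⁻¹ * (volume (Set.Ioc (0:ℝ) 1 ∩ Set.Ioc a b)).toReal
      ≤ (b - a)⁻¹ * (b - a) := by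
        apply mul_le_mul_of_nonneg_left h2 (inv_nonneg.2 (sub_nonneg.2 hab.le))
    _ ≤ 1 := by
        rw [inv_mul_cancel₀ (ne_of_gt (sub_pos.2 hab))]

lemma mwt_le_HLM_indOI (t : ℝ) : mwt t ≤ HLM indOI t := by
  set a : ℝ := -|t| - 1 with ha
  set b : ℝ := |t| + 1 with hb
  have hab : a < b := by
    have := abs_nonneg t; simp only [ha, hb]; linarith
  have hx : t ∈ Set.Icc a b := by
    constructor
    · have := neg_abs_le t; simp only [ha]; linarith
    · have := le_abs_self t; simp only [hb]; linarith
  have hsub : Set.Ioc (0:ℝ) 1 ⊆ Set.Ioc a b := by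
    apply Set.Ioc_subset_Ioc
    · have := abs_nonneg t; simp only [ha]; linarith
    · have := abs_nonneg t; simp only [hb]; linarith
  have hint : ∫ s in Set.Ioc a b, |indOI s| = 1 := by
    rw [indOI_integral, Set.inter_eq_left.2 hsub]
    simp
  have hle : (b - a)⁻¹ * ∫ s in Set.Ioc a b, |indOI s| ≤ HLM indOI t :=
    le_HLM (avset_indOI_bddAbove t) hab hx
  rw [hint, mul_one] at hle
  refine le_trans ?_ hle
  have h1 : b - a = 2 * |t| + 2 := by simp only [ha, hb]; ring
  rw [h1]
  apply inv_anti₀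
  · positivity
  · linarith

end Aux

section Aux2
open Set MeasureTheory Metric

lemma Ioc_subset_closedBall {t a b : ℝ} (hx : t ∈ Set.Icc a b) :
    Set.Ioc a b ⊆ closedBall t (b - a) := by
  intro s hs
  rw [mem_closedBall, Real.dist_eq, abs_le]
  constructor
  · have h1 := hs.1; have h2 := hs.2; have h3 := hx.1; have h4 := hx.2; linarith
  · have h1 := hs.1; have h2 := hs.2; have h3 := hx.1; have h4 := hx.2; linarith

lemma ae_avg_le_HLM {f : ℝ → ℝ} (hloc : LocallyIntegrable f volume)
    (hdecay : Integrable (fun t => |f t| * mwt t) volume) :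
    ∀ᵐ t ∂volume, ∀ a b : ℝ, a < b → t ∈ Set.Icc a b →
      (b - a)⁻¹ * ∫ s in Set.Ioc a b, |f s| ≤ HLM f t := by
  have habs : LocallyIntegrable (fun s => |f s|) volume := by
    have hm : AEStronglyMeasurable (fun s => |f s|) volume := by
      have := hloc.aestronglyMeasurable.norm
      simpa [Real.norm_eq_abs] using this
    apply hloc.mono hm
    filter_upwards with x
    simp [Real.norm_eq_abs]
  filter_upwards [IsUnifLocDoublingMeasure.ae_tendsto_average
    (μ := (volume : Measure ℝ)) habs 1] with t ht
  -- Lebesgue point behaviour at t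
  have hT : Tendsto (fun r : ℝ => ⨍ y in closedBall t r, |f y| ∂volume) (nhdsWithin 0 (Set.Ioi 0))
      (nhds (|f t|)) := by
    apply ht (fun _ : ℝ => t) (fun r => r) tendsto_id
    filter_upwards [self_mem_nhdsWithin] with r hr
    rw [mem_closedBall, dist_self]
    simp only [Set.mem_Ioi] at hr
    linarith
  have hev : ∀ᶠ r in nhdsWithin 0 (Set.Ioi 0),
      (fun r : ℝ => ⨍ y in closedBall t r, |f y| ∂volume) r < |f t| + 1 :=
    hT.eventually_lt_const (lt_add_one _)
  rw [eventually_iff, mem_nhdsGT_iff_exists_Ioc_subset] at hev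
  obtain ⟨δ, hδpos, hδ⟩ := hev
  simp only [Set.mem_Ioi] at hδpos
  set D : ℝ := ∫ s, |f s| * mwt s ∂volume with hD
  have hD0 : 0 ≤ D := integral_nonneg (fun s => mul_nonneg (abs_nonneg _) (mwt_pos s).le)
  set Ib : ℝ := ∫ s in closedBall t (1 + δ), |f s| ∂volume with hIb
  have hIb0 : 0 ≤ Ib :=
    setIntegral_nonneg measurableSet_closedBall (fun s _ => abs_nonneg _)
  set B : ℝ := max (2 * (|f t| + 1)) (max (δ⁻¹ * Ib) ((2 * |t| + 5) * D)) with hB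
  have hbdd : BddAbove (avset f t) := by
    refine ⟨B, ?_⟩
    rintro r ⟨a, b, hab, hx, rfl⟩
    set ℓ : ℝ := b - a with hℓ
    have hℓpos : 0 < ℓ := sub_pos.2 hab
    have hsubball : Set.Ioc a b ⊆ closedBall t ℓ := Ioc_subset_closedBall hx
    have hball_int : ∀ R : ℝ, IntegrableOn (fun s => |f s|) (closedBall t R) volume :=
      fun R => habs.integrableOn_isCompact (isCompact_closedBall t R)
    have hIoc_le_ball : ∀ R : ℝ, Set.Ioc a b ⊆ closedBall t R →
        (∫ s in Set.Ioc a b, |f s|) ≤ ∫ s in closedBall t R, |f s| := by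
      intro R hsub
      apply setIntegral_mono_set (hball_int R)
      · exact Filter.Eventually.of_forall (fun s => abs_nonneg _)
      · exact Filter.Eventually.of_forall hsub
    rcases le_or_gt ℓ δ with hcase | hcase
    · -- small interval: Lebesgue point bound
      have h1 : (∫ s in Set.Ioc a b, |f s|) ≤ ∫ s in closedBall t ℓ, |f s| :=
        hIoc_le_ball ℓ hsubball
      have h2 : (⨍ y in closedBall t ℓ, |f y| ∂volume) < |f t| + 1 :=
        hδ ⟨hℓpos, hcase⟩
      have h3 : (⨍ y in closedBall t ℓ, |f y| ∂volume)
          = (2 * ℓ)⁻¹ * ∫ s in closedBall t ℓ, |f s| := by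
        rw [setAverage_eq, measureReal_def, Real.volume_closedBall, ENNReal.toReal_ofReal (by linarith)]
        simp [smul_eq_mul]
      have h4 : ℓ⁻¹ * (∫ s in Set.Ioc a b, |f s|) ≤ 2 * ((2 * ℓ)⁻¹ * ∫ s in closedBall t ℓ, |f s|) := by
        have : (2:ℝ) * (2 * ℓ)⁻¹ = ℓ⁻¹ := by
          field_simp
        rw [← mul_assoc, this]
        exact mul_le_mul_of_nonneg_left h1 (inv_nonneg.2 hℓpos.le)
      refine le_trans h4 ?_
      rw [← h3]
      refine le_trans (by linarith [h2.le] : 2 * (⨍ y in closedBall t ℓ, |f y| ∂volume) ≤ 2 * (|f t| + 1)) ?_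
      exact le_max_left _ _
    · rcases le_or_gt ℓ 1 with hcase2 | hcase2
      · -- medium interval
        have h1 : (∫ s in Set.Ioc a b, |f s|) ≤ Ib := by
          refine hIoc_le_ball (1 + δ) (le_trans hsubball (closedBall_subset_closedBall (by linarith)))
        have h2 : ℓ⁻¹ ≤ δ⁻¹ := by
          apply inv_anti₀ hδpos hcase.le
        have h3 : ℓ⁻¹ * (∫ s in Set.Ioc a b, |f s|) ≤ δ⁻¹ * Ib := by
          apply mul_le_mul h2 h1 (setIntegral_nonneg measurableSet_Ioc (fun s _ => abs_nonneg _))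
            (inv_nonneg.2 hδpos.le)
        exact le_trans h3 (le_trans (le_max_left _ _) (le_max_right _ _))
      · -- long interval: decay bound
        have hptwise : ∀ s ∈ Set.Ioc a b, |f s| ≤ (2 * |t| + 2 * ℓ + 3) * (|f s| * mwt s) := by
          intro s hs
          have hdist : |s - t| ≤ ℓ := by
            have := hsubball hs
            rwa [mem_closedBall, Real.dist_eq] at this
          have habs' : |s| ≤ |t| + ℓ := by
            have h := abs_sub_abs_le_abs_sub s t
            linarith
          have hmw : mwt s * (2 * |s| + 3) = 1 := by
            unfold mwt
            rw [inv_mul_cancel₀]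
            positivity
          have hnn : 0 ≤ |f s| * mwt s := mul_nonneg (abs_nonneg _) (mwt_pos s).le
          calc |f s| = (|f s| * mwt s) * (2 * |s| + 3) := by
                rw [mul_assoc, hmw, mul_one]
            _ ≤ (|f s| * mwt s) * (2 * |t| + 2 * ℓ + 3) := by
                apply mul_le_mul_of_nonneg_left _ hnn
                linarith
            _ = (2 * |t| + 2 * ℓ + 3) * (|f s| * mwt s) := by ring
        have hint1 : IntegrableOn (fun s => |f s|) (Set.Ioc a b) volume :=
          (hball_int ℓ).mono_set hsubball
        have hint2 : IntegrableOn (fun s => (2 * |t| + 2 * ℓ + 3) * (|f s| * mwt s))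
            (Set.Ioc a b) volume :=
          (hdecay.const_mul _).integrableOn
        have h1 : (∫ s in Set.Ioc a b, |f s|)
            ≤ ∫ s in Set.Ioc a b, (2 * |t| + 2 * ℓ + 3) * (|f s| * mwt s) :=
          setIntegral_mono_on hint1 hint2 measurableSet_Ioc hptwise
        have h2 : (∫ s in Set.Ioc a b, (2 * |t| + 2 * ℓ + 3) * (|f s| * mwt s))
            = (2 * |t| + 2 * ℓ + 3) * ∫ s in Set.Ioc a b, |f s| * mwt s :=
          integral_const_mul _ _
        have h3 : (∫ s in Set.Ioc a b, |f s| * mwt s) ≤ D := by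
          rw [hD]
          apply setIntegral_le_integral hdecay
          exact Filter.Eventually.of_forall (fun s => mul_nonneg (abs_nonneg _) (mwt_pos s).le)
        have h5 : ℓ⁻¹ * (∫ s in Set.Ioc a b, |f s|) ≤ ℓ⁻¹ * ((2 * |t| + 2 * ℓ + 3) * D) := by
          apply mul_le_mul_of_nonneg_left _ (inv_nonneg.2 hℓpos.le)
          refine le_trans h1 ?_
          rw [h2]
          apply mul_le_mul_of_nonneg_left h3 (by positivity)
        have h6 : ℓ⁻¹ * ((2 * |t| + 2 * ℓ + 3) * D) ≤ (2 * |t| + 5) * D := by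
          have hinv1 : ℓ⁻¹ ≤ 1 := by
            rw [inv_le_one_iff₀]; right; exact hcase2.le
          have hinv0 : 0 ≤ ℓ⁻¹ := inv_nonneg.2 hℓpos.le
          have hexp : ℓ⁻¹ * (2 * ℓ) = 2 := by field_simp
          have h7 : ℓ⁻¹ * (2 * |t| + 2 * ℓ + 3) ≤ 2 * |t| + 5 := by
            have h8 : ℓ⁻¹ * (2 * |t| + 3) ≤ 1 * (2 * |t| + 3) :=
              mul_le_mul_of_nonneg_right hinv1 (by positivity)
            nlinarith [abs_nonneg t]
          calc ℓ⁻¹ * ((2 * |t| + 2 * ℓ + 3) * D) = (ℓ⁻¹ * (2 * |t| + 2 * ℓ + 3)) * D := by ring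
            _ ≤ (2 * |t| + 5) * D := mul_le_mul_of_nonneg_right h7 hD0
        exact le_trans (le_trans h5 h6) (le_trans (le_max_right _ _) (le_max_right _ _))
  intro a b hab hx
  exact le_HLM hbdd hab hx

end Aux2

section Aux3
open Set MeasureTheory

lemma BFS.mem_zero (Φ : BFS) (hBS : Φ.IsBS) : Φ.Mem (fun _ => (0:ℝ)) := by
  have h := hBS.indicator_mem ∅ MeasurableSet.empty (by simp)
  simpa using h

lemma BFS.norm_zero (Φ : BFS) : Φ.N (fun _ => (0:ℝ)) = 0 := by
  have h := Φ.norm_smul' 0 (fun _ => (0:ℝ))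
  have h2 : Φ.N 0 = 0 := by simpa using h
  exact h2

lemma BFS.mem_abs (Φ : BFS) {f : ℝ → ℝ} (hf : Φ.Mem f) : Φ.Mem (fun t => |f t|) := by
  apply Φ.ideal _ f _ hf
  · filter_upwards with t; simp
  · have := (Φ.mem_meas f hf).norm
    simpa [Real.norm_eq_abs] using this

lemma BFS.norm_abs_le (Φ : BFS) {f : ℝ → ℝ} (hf : Φ.Mem f) :
    Φ.N (fun t => |f t|) ≤ Φ.N f := by
  apply Φ.ideal_norm _ f (Φ.mem_abs hf) hf
  filter_upwards with t; simp

lemma BFS.mem_smul' (Φ : BFS) (c : ℝ) {f : ℝ → ℝ} (hf : Φ.Mem f) :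
    Φ.Mem (fun t => c * f t) := by
  have h := Φ.smul_mem c f hf
  have he : (c • f) = (fun t => c * f t) := by
    funext t; simp [smul_eq_mul]
  rwa [he] at h

lemma BFS.norm_smul'' (Φ : BFS) (c : ℝ) (f : ℝ → ℝ) :
    Φ.N (fun t => c * f t) = |c| * Φ.N f := by
  have he : (c • f) = (fun t => c * f t) := by
    funext t; simp [smul_eq_mul]
  rw [← he, Φ.norm_smul']

lemma BFS.mem_sum (Φ : BFS) (hBS : Φ.IsBS) (s : Finset ℕ) (v : ℕ → ℝ → ℝ)
    (h : ∀ n ∈ s, Φ.Mem (v n)) : Φ.Mem (fun t => ∑ n ∈ s, v n t) := by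
  classical
  induction s using Finset.induction_on with
  | empty => simpa using Φ.mem_zero hBS
  | insert x s' hx ih =>
    have h1 : Φ.Mem (v x) := h x (Finset.mem_insert_self x s')
    have h2 : Φ.Mem (fun t => ∑ n ∈ s', v n t) := ih (fun n hn => h n (Finset.mem_insert_of_mem hn))
    have h3 := Φ.add_mem _ _ h1 h2
    apply Φ.mem_congr _ _ h3
    filter_upwards with t
    simp [Finset.sum_insert hx]

lemma BFS.norm_sum_le (Φ : BFS) (hBS : Φ.IsBS) (s : Finset ℕ) (v : ℕ → ℝ → ℝ)
    (h : ∀ n ∈ s, Φ.Mem (v n)) : Φ.N (fun t => ∑ n ∈ s, v n t) ≤ ∑ n ∈ s, Φ.N (v n) := by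
  classical
  induction s using Finset.induction_on with
  | empty => simp only [Finset.sum_empty]; rw [Φ.norm_zero]
  | insert x s' hx ih =>
    have h1 : Φ.Mem (v x) := h x (Finset.mem_insert_self x s')
    have h2 : Φ.Mem (fun t => ∑ n ∈ s', v n t) :=
      Φ.mem_sum hBS s' v (fun n hn => h n (Finset.mem_insert_of_mem hn))
    have hadd := Φ.norm_add_le' (v x) (fun t => ∑ n ∈ s', v n t) h1 h2
    have hco : Φ.N (fun t => ∑ n ∈ insert x s', v n t)
        = Φ.N ((v x) + (fun t => ∑ n ∈ s', v n t)) := by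
      apply Φ.norm_congr
      filter_upwards with t
      simp [Finset.sum_insert hx]
    rw [hco, Finset.sum_insert hx]
    refine le_trans hadd ?_
    have h4 := ih (fun n hn => h n (Finset.mem_insert_of_mem hn))
    linarith

/-- The defining set of the Köthe dual norm is bounded above, for any `φ ∈ Φ'`. -/
lemma kN_bddAbove (Φ : BFS) (hBS : Φ.IsBS) {φ : ℝ → ℝ} (hφ : kMem Φ φ) :
    BddAbove {r : ℝ | ∃ f, Φ.Mem f ∧ Φ.N f ≤ 1 ∧ r = ∫ t, |f t * φ t|} := by
  classical
  by_contra hnb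
  rw [not_bddAbove_iff] at hnb
  have hex : ∀ n : ℕ, ∃ f, Φ.Mem f ∧ Φ.N f ≤ 1 ∧ (4:ℝ)^n < ∫ t, |f t * φ t| := by
    intro n
    obtain ⟨r, ⟨f, hf1, hf2, rfl⟩, hr⟩ := hnb ((4:ℝ)^n)
    exact ⟨f, hf1, hf2, hr⟩
  choose F hF1 hF2 hF3 using hex
  have hFms : ∀ n, AEStronglyMeasurable (F n) volume := fun n => Φ.mem_meas _ (hF1 n)
  set Fm : ℕ → ℝ → ℝ := fun n => (hFms n).mk (F n) with hFmdef
  have hFmm : ∀ n, StronglyMeasurable (Fm n) := fun n => (hFms n).stronglyMeasurable_mk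
  have hFme : ∀ n, F n =ᵐ[volume] Fm n := fun n => (hFms n).ae_eq_mk
  set v : ℕ → ℝ → ℝ := fun n t => |F n t| / 2 ^ n with hv
  set u : ℕ → ℝ → ℝ := fun m t => ∑ n ∈ Finset.range (m + 1), v n t with hu
  have hvmem : ∀ n, Φ.Mem (v n) := by
    intro n
    have h1 := Φ.mem_abs (hF1 n)
    have h2 := Φ.mem_smul' ((2:ℝ)^n)⁻¹ h1
    apply Φ.mem_congr _ _ h2
    filter_upwards with t
    simp only [hv, div_eq_inv_mul]
  have hvnn : ∀ n t, 0 ≤ v n t := by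
    intro n t; simp only [hv]; positivity
  have hvnorm : ∀ n, Φ.N (v n) ≤ (1/2) ^ n := by
    intro n
    have he : Φ.N (v n) = |((2:ℝ)^n)⁻¹| * Φ.N (fun t => |F n t|) := by
      rw [← Φ.norm_smul'' ((2:ℝ)^n)⁻¹ (fun t => |F n t|)]
      apply Φ.norm_congr
      filter_upwards with t
      simp only [hv, div_eq_inv_mul]
    rw [he, abs_of_pos (by positivity)]
    have h1 : Φ.N (fun t => |F n t|) ≤ 1 := le_trans (Φ.norm_abs_le (hF1 n)) (hF2 n)
    calc ((2:ℝ)^n)⁻¹ * Φ.N (fun t => |F n t|) ≤ ((2:ℝ)^n)⁻¹ * 1 :=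
          mul_le_mul_of_nonneg_left h1 (by positivity)
      _ = (1/2)^n := by rw [mul_one, one_div, inv_pow]
  have humem : ∀ m, Φ.Mem (u m) := fun m => Φ.mem_sum hBS _ _ (fun n _ => hvmem n)
  have hunorm : ∀ m, Φ.N (u m) ≤ 2 := by
    intro m
    refine le_trans (Φ.norm_sum_le hBS _ _ (fun n _ => hvmem n)) ?_
    refine le_trans (Finset.sum_le_sum (fun n _ => hvnorm n)) (sum_geometric_two_le (m+1))
  have hunn : ∀ m t, 0 ≤ u m t := fun m t => Finset.sum_nonneg (fun n _ => hvnn n t)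
  have humono : ∀ m t, u m t ≤ u (m+1) t := by
    intro m t
    apply Finset.sum_le_sum_of_subset_of_nonneg (Finset.range_subset_range.2 (by omega))
    intro n _ _
    exact hvnn n t
  set Q : ℝ → ℝ≥0∞ := fun t => ∑' n, ENNReal.ofReal (|Fm n t| / 2 ^ n) with hQ
  have hQm : Measurable Q := by
    apply Measurable.ennreal_tsum
    intro n
    exact ((hFmm n).measurable.abs.div_const _).ennreal_ofReal
  set A : Set ℝ := {t | Q t = ∞} with hA
  have hAm : MeasurableSet A := hQm (measurableSet_singleton ∞)
  set um : ℕ → ℝ → ℝ := fun m t => ∑ n ∈ Finset.range (m + 1), |Fm n t| / 2 ^ n with hum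
  have humm : ∀ m, Measurable (um m) := by
    intro m
    apply Finset.measurable_sum
    intro n _
    exact (hFmm n).measurable.abs.div_const _
  have hume : ∀ m, u m =ᵐ[volume] um m := by
    intro m
    have hae : ∀ᵐ t ∂volume, ∀ n, F n t = Fm n t := ae_all_iff.2 (fun n => hFme n)
    filter_upwards [hae] with t ht
    apply Finset.sum_congr rfl
    intro n _
    simp only [hv, ht n]
  -- A ∩ (finite interval) is null
  have hA'null : ∀ n₀ : ℕ, volume (A ∩ Set.Ioc (-(n₀:ℝ)-1) (n₀+1)) = 0 := by
    intro n₀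
    set A' : Set ℝ := A ∩ Set.Ioc (-(n₀:ℝ)-1) (n₀+1) with hA'
    have hA'm : MeasurableSet A' := hAm.inter measurableSet_Ioc
    have hA'fin : volume A' < ⊤ :=
      lt_of_le_of_lt (measure_mono Set.inter_subset_right)
        (by rw [Real.volume_Ioc]; exact ENNReal.ofReal_lt_top)
    have hmemA' : Φ.Mem (Set.indicator A' fun _ => (1:ℝ)) := hBS.indicator_mem A' hA'm hA'fin
    have hkey : ∀ lam : ℝ, 0 < lam → Φ.N (Set.indicator A' fun _ => (1:ℝ)) ≤ 2 / lam := by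
      intro lam hlam
      set S : ℕ → Set ℝ := fun m => A' ∩ {t | lam ≤ um m t} with hS
      have hSm : ∀ m, MeasurableSet (S m) :=
        fun m => hA'm.inter (measurableSet_le measurable_const (humm m))
      have hummono : ∀ m t, um m t ≤ um (m+1) t := by
        intro m t
        apply Finset.sum_le_sum_of_subset_of_nonneg (Finset.range_subset_range.2 (by omega))
        intro n _ _; positivity
      have hSmono : ∀ m, S m ⊆ S (m+1) := by
        intro m t ht
        exact ⟨ht.1, le_trans ht.2 (hummono m t)⟩
      have hSmono' : Monotone S := monotone_nat_of_le_succ hSmono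
      have hSsub : ∀ m, S m ⊆ A' := fun m => Set.inter_subset_left
      set w : ℕ → ℝ → ℝ := fun m => Set.indicator (S m) (fun _ => (1:ℝ)) with hw
      have hwmem : ∀ m, Φ.Mem (w m) :=
        fun m => hBS.indicator_mem _ (hSm m) (lt_of_le_of_lt (measure_mono (hSsub m)) hA'fin)
      have hwnorm : ∀ m, Φ.N (w m) ≤ 2 / lam := by
        intro m
        have hle : ∀ᵐ t ∂volume, |lam * w m t| ≤ |u m t| := by
          filter_upwards [hume m] with t ht
          by_cases hts : t ∈ S m
          · simp only [hw, Set.indicator_of_mem hts]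
            have h1 : lam ≤ um m t := hts.2
            rw [ht, mul_one, abs_of_pos hlam, abs_of_nonneg (le_trans hlam.le h1)]
            exact h1
          · simp only [hw, Set.indicator_of_notMem hts]
            simp [abs_nonneg]
        have h2 := Φ.ideal_norm (fun t => lam * w m t) (u m)
          (Φ.mem_smul' lam (hwmem m)) (humem m) hle
        rw [Φ.norm_smul'' lam (w m), abs_of_pos hlam] at h2
        have h3 : Φ.N (w m) * lam ≤ 2 := by
          rw [mul_comm]; exact le_trans h2 (hunorm m)
        exact (le_div_iff₀ hlam).2 h3
      -- limit indicator
      set wlim : ℝ → ℝ := Set.indicator (⋃ m, S m) (fun _ => (1:ℝ)) with hwlim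
      have hmono : ∀ m, ∀ᵐ t ∂volume, 0 ≤ w m t ∧ w m t ≤ w (m+1) t := by
        intro m
        filter_upwards with t
        constructor
        · exact Set.indicator_nonneg (fun _ _ => zero_le_one) t
        · exact Set.indicator_le_indicator_of_subset (hSmono m) (fun _ => zero_le_one) t
      have hconv : ∀ᵐ t ∂volume, Tendsto (fun m => w m t) atTop (𝓝 (wlim t)) := by
        filter_upwards with t
        by_cases htu : t ∈ ⋃ m, S m
        · obtain ⟨m₀, hm₀⟩ := Set.mem_iUnion.1 htu
          have hev : ∀ m ≥ m₀, w m t = wlim t := by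
            intro m hm
            have htm : t ∈ S m := hSmono' hm hm₀
            simp only [hw, hwlim, Set.indicator_of_mem htm, Set.indicator_of_mem htu]
          exact tendsto_atTop_of_eventually_const hev
        · have hev : ∀ m, w m t = wlim t := by
            intro m
            have htm : t ∉ S m := fun hc => htu (Set.mem_iUnion.2 ⟨m, hc⟩)
            simp only [hw, hwlim, Set.indicator_of_notMem htm, Set.indicator_of_notMem htu]
          simp only [hev]
          exact tendsto_const_nhds
      obtain ⟨hwlimmem, hwlimnorm⟩ := Φ.fatou w wlim (2/lam) hwmem hwnorm hmono hconv
      -- A' ⊆ ⋃ S m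
      have hsub : A' ⊆ ⋃ m, S m := by
        intro t ht
        have hQt : Q t = ∞ := ht.1
        by_contra hc
        have hns : ∀ m, um m t < lam := by
          intro m
          by_contra hns'
          exact hc (Set.mem_iUnion.2 ⟨m, ht, le_of_not_gt hns'⟩)
        have hbound : Q t ≤ ENNReal.ofReal lam := by
          rw [hQ]
          simp only
          rw [ENNReal.tsum_eq_iSup_sum]
          apply iSup_le
          intro s
          have hms : s ⊆ Finset.range ((s.sup id) + 1) := by
            intro n hn
            rw [Finset.mem_range]
            exact Nat.lt_succ_of_le (Finset.le_sup (f := id) hn)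
          calc ∑ n ∈ s, ENNReal.ofReal (|Fm n t| / 2 ^ n)
              ≤ ∑ n ∈ Finset.range ((s.sup id) + 1), ENNReal.ofReal (|Fm n t| / 2 ^ n) :=
                Finset.sum_le_sum_of_subset hms
            _ = ENNReal.ofReal (um (s.sup id) t) := by
                rw [ENNReal.ofReal_sum_of_nonneg (fun i _ => by positivity)]
            _ ≤ ENNReal.ofReal lam := ENNReal.ofReal_le_ofReal (hns _).le
        rw [hQt] at hbound
        exact absurd (le_antisymm hbound le_top) (by simp)
      have hindle : ∀ᵐ t ∂volume, |Set.indicator A' (fun _ => (1:ℝ)) t| ≤ |wlim t| := by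
        filter_upwards with t
        have h1 : Set.indicator A' (fun _ => (1:ℝ)) t ≤ wlim t :=
          Set.indicator_le_indicator_of_subset hsub (fun _ => zero_le_one) t
        have h2 : 0 ≤ Set.indicator A' (fun _ => (1:ℝ)) t :=
          Set.indicator_nonneg (fun _ _ => zero_le_one) t
        rw [abs_of_nonneg h2, abs_of_nonneg (le_trans h2 h1)]
        exact h1
      exact le_trans (Φ.ideal_norm _ wlim hmemA' hwlimmem hindle) hwlimnorm
    -- conclude N = 0 and hence null
    have hN0 : Φ.N (Set.indicator A' fun _ => (1:ℝ)) = 0 := by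
      by_contra h0
      have hpos : 0 < Φ.N (Set.indicator A' fun _ => (1:ℝ)) :=
        lt_of_le_of_ne (Φ.norm_nonneg' _) (Ne.symm h0)
      have h1 := hkey (4 / Φ.N (Set.indicator A' fun _ => (1:ℝ))) (by positivity)
      rw [div_div_eq_mul_div, le_div_iff₀ (by positivity)] at h1
      nlinarith
    have hae0 : (Set.indicator A' fun _ => (1:ℝ)) =ᵐ[volume] (fun _ => (0:ℝ)) :=
      (Φ.norm_eq_zero' _ hmemA').1 hN0
    have : volume {t | ¬ ((Set.indicator A' fun _ => (1:ℝ)) t = (fun _ => (0:ℝ)) t)} = 0 := hae0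
    apply measure_mono_null _ this
    intro t ht
    simp only [Set.mem_setOf_eq]
    rw [Set.indicator_of_mem ht]
    norm_num
  -- A is null
  have hAnull : volume A = 0 := by
    have hcover : A ⊆ ⋃ n₀ : ℕ, A ∩ Set.Ioc (-(n₀:ℝ)-1) (n₀+1) := by
      intro t ht
      obtain ⟨n, hn⟩ := exists_nat_gt |t|
      refine Set.mem_iUnion.2 ⟨n, ht, ?_, ?_⟩
      · have := neg_abs_le t; linarith
      · have := le_abs_self t; linarith
    exact measure_mono_null hcover (measure_iUnion_null (fun n₀ => hA'null n₀))
  have hQfin : ∀ᵐ t ∂volume, Q t ≠ ∞ := by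
    rw [MeasureTheory.ae_iff]
    convert hAnull using 2
    ext t
    simp [hA]
  -- the limit function
  set flim : ℝ → ℝ := fun t => (Q t).toReal with hflim
  have haeF : ∀ᵐ t ∂volume, ∀ n, F n t = Fm n t := ae_all_iff.2 (fun n => hFme n)
  have hkeyae : ∀ᵐ t ∂volume, Summable (fun n => |F n t| / 2^n) ∧
      Tendsto (fun m => u m t) atTop (𝓝 (flim t)) ∧ (∀ n, |F n t|/2^n ≤ flim t) := by
    filter_upwards [hQfin, haeF] with t hfin heq
    have hsumm : Summable (fun n => |Fm n t| / 2^n) := by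
      have h1 := ENNReal.summable_toReal hfin
      have h2 : ∀ n, (ENNReal.ofReal (|Fm n t| / 2 ^ n)).toReal = |Fm n t| / 2^n :=
        fun n => ENNReal.toReal_ofReal (by positivity)
      rwa [funext h2] at h1
    have hsum' : Summable (fun n => |F n t| / 2^n) := by
      have : (fun n => |F n t| / 2^n) = (fun n => |Fm n t| / 2^n) := by
        funext n; rw [heq n]
      rw [this]; exact hsumm
    have hQt : Q t = ENNReal.ofReal (∑' n, |Fm n t| / 2^n) := by
      rw [hQ]
      exact (ENNReal.ofReal_tsum_of_nonneg (fun n => by positivity) hsumm).symm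
    have hflimt : flim t = ∑' n, |Fm n t| / 2^n := by
      rw [hflim]
      simp only
      rw [hQt, ENNReal.toReal_ofReal (tsum_nonneg (fun n => by positivity))]
    refine ⟨hsum', ?_, ?_⟩
    · have hT := hsumm.hasSum.tendsto_sum_nat
      have hT2 := hT.comp (tendsto_add_atTop_nat 1)
      rw [hflimt]
      apply hT2.congr
      intro m
      simp only [Function.comp_apply, hu, hv]
      apply Finset.sum_congr rfl
      intro n _
      rw [heq n]
    · intro n
      rw [hflimt, heq n]
      exact Summable.le_tsum hsumm n (fun j _ => by positivity)
  have hmono2 : ∀ m, ∀ᵐ t ∂volume, 0 ≤ u m t ∧ u m t ≤ u (m+1) t := by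
    intro m
    filter_upwards with t
    exact ⟨hunn m t, humono m t⟩
  have hconv2 : ∀ᵐ t ∂volume, Tendsto (fun m => u m t) atTop (𝓝 (flim t)) := by
    filter_upwards [hkeyae] with t ht
    exact ht.2.1
  obtain ⟨hflimmem, _⟩ := Φ.fatou u flim 2 humem hunorm hmono2 hconv2
  -- contradiction via integrability of flim * φ
  have hint : Integrable (fun t => flim t * φ t) volume := hφ.2 flim hflimmem
  set Z : ℝ := ∫ t, |flim t * φ t| with hZ
  have hZbig : ∀ n : ℕ, (2:ℝ)^n ≤ Z := by
    intro n
    have hptw : ∀ᵐ t ∂volume, ((2:ℝ)^n)⁻¹ * |F n t * φ t| ≤ |flim t * φ t| := by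
      filter_upwards [hkeyae] with t ht
      have h1 : |F n t| / 2^n ≤ flim t := ht.2.2 n
      have h2 : 0 ≤ flim t := ENNReal.toReal_nonneg
      calc ((2:ℝ)^n)⁻¹ * |F n t * φ t| = (|F n t| / 2^n) * |φ t| := by
            rw [abs_mul]; ring
        _ ≤ flim t * |φ t| := mul_le_mul_of_nonneg_right h1 (abs_nonneg _)
        _ = |flim t * φ t| := by rw [abs_mul, abs_of_nonneg h2]
    have hint1 : Integrable (fun t => ((2:ℝ)^n)⁻¹ * |F n t * φ t|) volume :=
      ((hφ.2 (F n) (hF1 n)).abs).const_mul _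
    have hint2 : Integrable (fun t => |flim t * φ t|) volume := hint.abs
    have h3 := integral_mono_ae hint1 hint2 hptw
    rw [integral_const_mul] at h3
    have h4 : ((2:ℝ)^n)⁻¹ * (4:ℝ)^n ≤ ((2:ℝ)^n)⁻¹ * ∫ t, |F n t * φ t| :=
      mul_le_mul_of_nonneg_left (hF3 n).le (by positivity)
    have h5 : ((2:ℝ)^n)⁻¹ * (4:ℝ)^n = 2^n := by
      have : (4:ℝ)^n = 2^n * 2^n := by
        rw [← mul_pow]; norm_num
      rw [this]
      field_simp
    rw [h5] at h4
    exact le_trans h4 h3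
  obtain ⟨n, hn⟩ := pow_unbounded_of_one_lt Z (by norm_num : (1:ℝ) < 2)
  exact absurd (hZbig n) (not_le.2 hn)

/-- Hölder's inequality for the Köthe dual. -/
lemma kN_holder (Φ : BFS) (hBS : Φ.IsBS) {φ : ℝ → ℝ} (hφ : kMem Φ φ)
    {f : ℝ → ℝ} (hf : Φ.Mem f) : ∫ t, |f t * φ t| ≤ Φ.N f * kN Φ φ := by
  rcases eq_or_lt_of_le (Φ.norm_nonneg' f) with h0 | hpos
  · have hf0 : f =ᵐ[volume] (fun _ => (0:ℝ)) := (Φ.norm_eq_zero' f hf).1 h0.symm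
    have : ∫ t, |f t * φ t| = 0 := by
      rw [← integral_zero (α := ℝ) (μ := volume) (G := ℝ)]
      apply integral_congr_ae
      filter_upwards [hf0] with t ht
      rw [ht]
      simp
    rw [this, ← h0, zero_mul]
  · set f' : ℝ → ℝ := fun t => (Φ.N f)⁻¹ * f t with hf'
    have hf'mem : Φ.Mem f' := Φ.mem_smul' _ hf
    have hf'norm : Φ.N f' = 1 := by
      rw [hf', Φ.norm_smul'', abs_of_pos (by positivity)]
      field_simp
    have helem : (∫ t, |f' t * φ t|) ∈
        {r : ℝ | ∃ g, Φ.Mem g ∧ Φ.N g ≤ 1 ∧ r = ∫ t, |g t * φ t|} :=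
      ⟨f', hf'mem, le_of_eq hf'norm, rfl⟩
    have hle : (∫ t, |f' t * φ t|) ≤ kN Φ φ := le_csSup (kN_bddAbove Φ hBS hφ) helem
    have heq : ∫ t, |f' t * φ t| = (Φ.N f)⁻¹ * ∫ t, |f t * φ t| := by
      rw [← integral_const_mul]
      apply integral_congr_ae
      filter_upwards with t
      rw [hf']
      rw [abs_mul, abs_mul, abs_mul, abs_of_pos (inv_pos.2 hpos)]
      ring
    rw [heq] at hle
    calc ∫ t, |f t * φ t| = Φ.N f * ((Φ.N f)⁻¹ * ∫ t, |f t * φ t|) := by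
          field_simp
      _ ≤ Φ.N f * kN Φ φ := mul_le_mul_of_nonneg_left hle hpos.le

lemma kN_nonneg (Φ : BFS) (hBS : Φ.IsBS) {φ : ℝ → ℝ} (hφ : kMem Φ φ) : 0 ≤ kN Φ φ := by
  have helem : (0:ℝ) ∈ {r : ℝ | ∃ g, Φ.Mem g ∧ Φ.N g ≤ 1 ∧ r = ∫ t, |g t * φ t|} := by
    refine ⟨fun _ => 0, Φ.mem_zero hBS, ?_, ?_⟩
    · rw [Φ.norm_zero]; norm_num
    · simp
  exact le_csSup (kN_bddAbove Φ hBS hφ) helem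

end Aux3

section Aux4
open Set MeasureTheory

lemma MeasureTheory.LocallyIntegrable.integrableOn_Ioc' {f : ℝ → ℝ} (hf : LocallyIntegrable f volume)
    {a b : ℝ} : IntegrableOn f (Set.Ioc a b) volume :=
  (hf.integrableOn_isCompact isCompact_Icc).mono_set Set.Ioc_subset_Icc_self

/-- Hypotheses on the sequence of iterated maximal functions. -/
structure GoodSeq (C : ℝ) (q : ℕ → ℝ → ℝ) : Prop where
  hC : 0 < C
  meas : ∀ k, AEStronglyMeasurable (q k) volume
  nonneg : ∀ k t, 0 ≤ q k t
  succ : ∀ k, q (k+1) = HLM (q k)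
  loc : ∀ k, LocallyIntegrable (q k) volume
  decay : ∀ k, Integrable (fun t => q k t * mwt t) volume
  bound : ∀ a b : ℝ, a < b → ∃ K : ℝ, 0 ≤ K ∧ ∀ k, (∫ t in Set.Ioc a b, q k t) ≤ K * C ^ k

/-- The Rubio de Francia sum. -/
def Rsum (C : ℝ) (q : ℕ → ℝ → ℝ) : ℝ → ℝ := fun t => ∑' k, q k t / (2*C)^k

/-- ENNReal version. -/
def Rsum' (C : ℝ) (q : ℕ → ℝ → ℝ) : ℝ → ℝ≥0∞ :=
  fun t => ∑' k, ENNReal.ofReal (q k t / (2*C)^k)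

namespace GoodSeq

variable {C : ℝ} {q : ℕ → ℝ → ℝ} (hq : GoodSeq C q)

lemma h2C (hq : GoodSeq C q) : (0:ℝ) < 2*C := by linarith [hq.hC]

lemma Rsum_nonneg (hq : GoodSeq C q) (t : ℝ) : 0 ≤ Rsum C q t :=
  tsum_nonneg (fun k => by
    have := hq.nonneg k t
    have := hq.h2C
    positivity)

lemma aemeas' (hq : GoodSeq C q) : AEMeasurable (Rsum' C q) volume := by
  apply AEMeasurable.ennreal_tsum
  intro k
  exact ENNReal.measurable_ofReal.comp_aemeasurable
    ((hq.meas k).aemeasurable.div_const _)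

lemma lintegral_term (hq : GoodSeq C q) (k : ℕ) {a b : ℝ} (hab : a < b) :
    ∫⁻ t in Set.Ioc a b, ENNReal.ofReal (q k t / (2*C)^k)
      = ENNReal.ofReal ((∫ t in Set.Ioc a b, q k t) / (2*C)^k) := by
  rw [← ofReal_integral_eq_lintegral_ofReal]
  · rw [integral_div]
  · exact ((hq.loc k).integrableOn_Ioc').div_const _
  · filter_upwards with t
    have h1 := hq.nonneg k t
    have h2 := hq.h2C
    positivity

lemma tsum_lintegral_ne_top (hq : GoodSeq C q) {a b : ℝ} (hab : a < b) :
    (∑' k, ∫⁻ t in Set.Ioc a b, ENNReal.ofReal (q k t / (2*C)^k)) ≠ ⊤ := by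
  obtain ⟨K, hK0, hK⟩ := hq.bound a b hab
  have h2C := hq.h2C
  have hterm : ∀ k, (∫ t in Set.Ioc a b, q k t) / (2*C)^k ≤ K * (1/2)^k := by
    intro k
    rw [div_le_iff₀ (by positivity)]
    calc (∫ t in Set.Ioc a b, q k t) ≤ K * C^k := hK k
      _ = K * (1/2)^k * (2*C)^k := by
          rw [mul_assoc, ← mul_pow]
          congr 2
          field_simp
  have hle : (∑' k, ∫⁻ t in Set.Ioc a b, ENNReal.ofReal (q k t / (2*C)^k))
      ≤ ∑' k, ENNReal.ofReal (K * (1/2)^k) := by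
    apply ENNReal.tsum_le_tsum
    intro k
    rw [hq.lintegral_term k hab]
    exact ENNReal.ofReal_le_ofReal (hterm k)
  have hsum : Summable (fun k : ℕ => K * (1/2)^k) :=
    (summable_geometric_of_lt_one (by norm_num) (by norm_num)).mul_left K
  have heq : (∑' k, ENNReal.ofReal (K * (1/2)^k)) = ENNReal.ofReal (∑' k : ℕ, K * (1/2)^k) :=
    (ENNReal.ofReal_tsum_of_nonneg (fun k => by positivity) hsum).symm
  rw [heq] at hle
  exact ne_top_of_le_ne_top ENNReal.ofReal_ne_top hle

lemma lintegral_Rsum'_ne_top (hq : GoodSeq C q) {a b : ℝ} (hab : a < b) :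
    ∫⁻ t in Set.Ioc a b, Rsum' C q t ≠ ⊤ := by
  unfold Rsum'
  have hmeas : ∀ k : ℕ, AEMeasurable (fun t => ENNReal.ofReal (q k t / (2*C)^k))
      (volume.restrict (Set.Ioc a b)) := by
    intro k
    apply ENNReal.measurable_ofReal.comp_aemeasurable
    exact ((hq.meas k).aemeasurable.div_const _).restrict
  rw [lintegral_tsum hmeas]
  exact hq.tsum_lintegral_ne_top hab

lemma ae_finite (hq : GoodSeq C q) : ∀ᵐ t ∂volume, Rsum' C q t ≠ ⊤ := by
  have hn : ∀ n : ℕ, ∀ᵐ t ∂volume, t ∈ Set.Ioc (-(n:ℝ)-1) (n+1) → Rsum' C q t ≠ ⊤ := by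
    intro n
    have hab : (-(n:ℝ)-1) < (n+1) := by
      have : (0:ℝ) ≤ n := Nat.cast_nonneg n
      linarith
    have h1 : ∀ᵐ t ∂(volume.restrict (Set.Ioc (-(n:ℝ)-1) (n+1))), Rsum' C q t < ⊤ :=
      ae_lt_top' (hq.aemeas'.restrict) (hq.lintegral_Rsum'_ne_top hab)
    rw [ae_restrict_iff' measurableSet_Ioc] at h1
    filter_upwards [h1] with t ht hmem
    exact (ht hmem).ne
  rw [← ae_all_iff] at hn
  filter_upwards [hn] with t ht
  obtain ⟨n, hn'⟩ := exists_nat_gt |t|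
  apply ht n
  constructor
  · have := neg_abs_le t; linarith
  · have := le_abs_self t; linarith

lemma ae_summable (hq : GoodSeq C q) : ∀ᵐ t ∂volume,
    Summable (fun k => q k t / (2*C)^k) ∧ Rsum C q t = (Rsum' C q t).toReal := by
  filter_upwards [hq.ae_finite] with t ht
  have hnn : ∀ k, 0 ≤ q k t / (2*C)^k := by
    intro k
    have h1 := hq.nonneg k t
    have h2 := hq.h2C
    positivity
  have hsumm : Summable (fun k => q k t / (2*C)^k) := by
    have h1 := ENNReal.summable_toReal ht
    have h2 : ∀ k, (ENNReal.ofReal (q k t / (2*C)^k)).toReal = q k t / (2*C)^k :=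
      fun k => ENNReal.toReal_ofReal (hnn k)
    rwa [funext h2] at h1
  refine ⟨hsumm, ?_⟩
  have hQt : Rsum' C q t = ENNReal.ofReal (∑' k, q k t / (2*C)^k) :=
    (ENNReal.ofReal_tsum_of_nonneg hnn hsumm).symm
  rw [hQt, ENNReal.toReal_ofReal (tsum_nonneg hnn)]
  rfl

lemma integrableOn (hq : GoodSeq C q) {a b : ℝ} (hab : a < b) :
    IntegrableOn (Rsum C q) (Set.Ioc a b) volume := by
  have h1 : Integrable (fun t => (Rsum' C q t).toReal)
      (volume.restrict (Set.Ioc a b)) :=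
    integrable_toReal_of_lintegral_ne_top hq.aemeas'.restrict (hq.lintegral_Rsum'_ne_top hab)
  apply h1.congr
  apply ae_restrict_of_ae
  filter_upwards [hq.ae_summable] with t ht
  exact ht.2.symm

set_option maxHeartbeats 1000000 in
lemma setIntegral_eq (hq : GoodSeq C q) {a b : ℝ} (hab : a < b) :
    ∫ t in Set.Ioc a b, Rsum C q t
      = ∑' k, (∫ t in Set.Ioc a b, q k t) / (2*C)^k := by
  have hmeas : ∀ k : ℕ, AEStronglyMeasurable (fun t => q k t / (2*C)^k)
      (volume.restrict (Set.Ioc a b)) := by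
    intro k
    have he : (fun t => q k t / (2*C)^k) = (fun t => (((2*C)^k)⁻¹) * q k t) := by
      funext t; rw [div_eq_inv_mul]
    rw [he]
    exact ((hq.meas k).const_mul _).restrict
  have hlint : (∑' k, ∫⁻ t in Set.Ioc a b, ‖q k t / (2*C)^k‖₊) ≠ ⊤ := by
    have hcong : ∀ k, (∫⁻ t in Set.Ioc a b, (‖q k t / (2*C)^k‖₊ : ℝ≥0∞))
        = ∫⁻ t in Set.Ioc a b, ENNReal.ofReal (q k t / (2*C)^k) := by
      intro k
      apply lintegral_congr
      intro t
      rw [← enorm_eq_nnnorm, Real.enorm_eq_ofReal_abs, abs_of_nonneg]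
      have h1 := hq.nonneg k t
      have h2 := hq.h2C
      positivity
    rw [funext hcong]
    exact hq.tsum_lintegral_ne_top hab
  have h := integral_tsum (f := fun (k : ℕ) (t : ℝ) => q k t / (2*C)^k)
    (μ := volume.restrict (Set.Ioc a b)) hmeas hlint
  calc ∫ t in Set.Ioc a b, Rsum C q t
      = ∑' k, ∫ t in Set.Ioc a b, q k t / (2*C)^k := h
    _ = ∑' k, (∫ t in Set.Ioc a b, q k t) / (2*C)^k := by
        congr 1
        funext k
        rw [integral_div]

set_option maxHeartbeats 2000000 in
/-- The key pointwise facts, almost everywhere. -/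
lemma ae_main (hq : GoodSeq C q) : ∀ᵐ t ∂volume,
    Summable (fun k => q k t / (2*C)^k) ∧
    (∀ a b : ℝ, a < b → t ∈ Set.Icc a b →
      (b - a)⁻¹ * ∫ s in Set.Ioc a b, Rsum C q s ≤ (2*C) * Rsum C q t) ∧
    (∀ k a b, a < b → t ∈ Set.Icc a b →
      (b - a)⁻¹ * ∫ s in Set.Ioc a b, q k s ≤ q (k+1) t) := by
  have havg : ∀ k, ∀ᵐ t ∂volume, ∀ a b : ℝ, a < b → t ∈ Set.Icc a b →
      (b - a)⁻¹ * ∫ s in Set.Ioc a b, q k s ≤ q (k+1) t := by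
    intro k
    have hdec : Integrable (fun t => |q k t| * mwt t) volume := by
      apply (hq.decay k).congr
      filter_upwards with t
      rw [abs_of_nonneg (hq.nonneg k t)]
    have h1 := ae_avg_le_HLM (hq.loc k) hdec
    filter_upwards [h1] with t ht a b hab hmem
    have h2 := ht a b hab hmem
    rw [hq.succ k]
    have h3 : (∫ s in Set.Ioc a b, |q k s|) = ∫ s in Set.Ioc a b, q k s := by
      apply integral_congr_ae
      filter_upwards with s
      rw [abs_of_nonneg (hq.nonneg k s)]
    rwa [h3] at h2
  filter_upwards [hq.ae_summable, ae_all_iff.2 havg] with t hsum havgt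
  have h2C := hq.h2C
  refine ⟨hsum.1, ?_, havgt⟩
  intro a b hab hmem
  have hiv : (0:ℝ) < b - a := sub_pos.2 hab
  rw [hq.setIntegral_eq hab]
  -- push the constant inside the sum
  have h1 : (b - a)⁻¹ * ∑' k, (∫ s in Set.Ioc a b, q k s) / (2*C)^k
      = ∑' k, ((b - a)⁻¹ * ∫ s in Set.Ioc a b, q k s) / (2*C)^k := by
    rw [← tsum_mul_left]
    congr 1
    funext k
    ring
  rw [h1]
  -- termwise comparison
  have hshift : Summable (fun k => q (k+1) t / (2*C)^(k+1)) :=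
    (summable_nat_add_iff 1).2 hsum.1
  have hRHS : Summable (fun k => q (k+1) t / (2*C)^k) := by
    have heq : (fun k => q (k+1) t / (2*C)^k) = (fun k => (2*C) * (q (k+1) t / (2*C)^(k+1))) := by
      funext k
      rw [pow_succ]
      field_simp
      rw [mul_div_cancel_right₀ _ (ne_of_gt (by linarith : (0:ℝ) < C))]
    rw [heq]
    exact hshift.mul_left _
  have hterm : ∀ k, ((b - a)⁻¹ * ∫ s in Set.Ioc a b, q k s) / (2*C)^k
      ≤ q (k+1) t / (2*C)^k := by
    intro k
    have hd : (0:ℝ) ≤ ((2*C)^k)⁻¹ := by positivity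
    have h := mul_le_mul_of_nonneg_right (havgt k a b hab hmem) hd
    rw [div_eq_mul_inv, div_eq_mul_inv]
    exact h
  have hLHS : Summable (fun k => ((b - a)⁻¹ * ∫ s in Set.Ioc a b, q k s) / (2*C)^k) := by
    apply Summable.of_nonneg_of_le _ hterm hRHS
    intro k
    have h0 : 0 ≤ ∫ s in Set.Ioc a b, q k s :=
      setIntegral_nonneg measurableSet_Ioc (fun s _ => hq.nonneg k s)
    positivity
  refine le_trans (Summable.tsum_le_tsum hterm hLHS hRHS) ?_
  have heq2 : ∑' k, q (k+1) t / (2*C)^k = (2*C) * ∑' k, q (k+1) t / (2*C)^(k+1) := by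
    rw [← tsum_mul_left]
    congr 1
    funext k
    rw [pow_succ]
    field_simp
    rw [mul_div_cancel_right₀ _ (ne_of_gt (by linarith : (0:ℝ) < C))]
  rw [heq2]
  apply mul_le_mul_of_nonneg_left _ h2C.le
  have h3 := Summable.tsum_eq_zero_add hsum.1
  have h4 : 0 ≤ q 0 t / (2*C)^0 := by
    have := hq.nonneg 0 t
    positivity
  unfold Rsum
  linarith [h3]

lemma ae_pos (hq : GoodSeq C q)
    (hpos : ∃ a₀ b₀ : ℝ, a₀ < b₀ ∧ 0 < ∫ t in Set.Ioc a₀ b₀, q 0 t) :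
    ∀ᵐ t ∂volume, 0 < Rsum C q t := by
  obtain ⟨a₀, b₀, hab₀, hpos₀⟩ := hpos
  have h2C := hq.h2C
  filter_upwards [hq.ae_main] with t ht
  obtain ⟨hsum, _, havgt⟩ := ht
  set a := min a₀ (t-1) with hadef
  set b := max b₀ (t+1) with hbdef
  have hab : a < b :=
    lt_of_le_of_lt (min_le_right _ _) (lt_of_lt_of_le (by linarith) (le_max_right _ _))
  have hmem : t ∈ Set.Icc a b :=
    ⟨le_trans (min_le_right _ _) (by linarith), le_trans (by linarith) (le_max_right _ _)⟩
  have hsub : Set.Ioc a₀ b₀ ⊆ Set.Ioc a b := Set.Ioc_subset_Ioc (min_le_left _ _) (le_max_left _ _)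
  have hint : (∫ s in Set.Ioc a₀ b₀, q 0 s) ≤ ∫ s in Set.Ioc a b, q 0 s := by
    apply setIntegral_mono_set (hq.loc 0).integrableOn_Ioc'
    · exact Filter.Eventually.of_forall (fun s => hq.nonneg 0 s)
    · exact Filter.Eventually.of_forall hsub
  have h1 : 0 < q 1 t := by
    have h2 : (0:ℝ) < (b - a)⁻¹ * ∫ s in Set.Ioc a b, q 0 s := by
      apply mul_pos (inv_pos.2 (sub_pos.2 hab))
      exact lt_of_lt_of_le hpos₀ hint
    exact lt_of_lt_of_le h2 (havgt 0 a b hab hmem)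
  have h5 : q 1 t / (2*C)^1 ≤ Rsum C q t := by
    apply Summable.le_tsum hsum 1
    intro j _
    have := hq.nonneg j t
    positivity
  exact lt_of_lt_of_le (by positivity) h5

end GoodSeq
end Aux4

section Aux5
open Set MeasureTheory

lemma BFS.locallyIntegrable (Φ : BFS) (hBS : Φ.IsBS) {f : ℝ → ℝ} (hf : Φ.Mem f) :
    LocallyIntegrable f volume := by
  rw [locallyIntegrable_iff]
  intro K hK
  obtain ⟨Ce, hCe⟩ := hBS.loc_int K hK.measurableSet hK.measure_lt_top
  exact (hCe f hf).1

lemma kMem.aesm {Φ : BFS} {φ : ℝ → ℝ} (hφ : kMem Φ φ) : AEStronglyMeasurable φ volume := hφ.1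

lemma kMem.ideal' {Φ : BFS} {φ g : ℝ → ℝ} (hg : kMem Φ g)
    (hφm : AEStronglyMeasurable φ volume) (hle : ∀ᵐ t ∂volume, |φ t| ≤ |g t|) : kMem Φ φ := by
  refine ⟨hφm, fun f hf => ?_⟩
  apply (hg.2 f hf).mono ((Φ.mem_meas f hf).mul hφm)
  filter_upwards [hle] with t ht
  simp only [Real.norm_eq_abs, Pi.mul_apply, abs_mul]
  exact mul_le_mul_of_nonneg_left ht (abs_nonneg _)

lemma kMem.locallyIntegrable {Φ : BFS} (hBS : Φ.IsBS) {φ : ℝ → ℝ} (hφ : kMem Φ φ) :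
    LocallyIntegrable φ volume := by
  rw [locallyIntegrable_iff]
  intro K hK
  have hind : Φ.Mem (Set.indicator K fun _ => (1:ℝ)) :=
    hBS.indicator_mem K hK.measurableSet hK.measure_lt_top
  have h1 : Integrable (fun t => (Set.indicator K fun _ => (1:ℝ)) t * φ t) volume :=
    hφ.2 _ hind
  have h2 : (fun t => (Set.indicator K fun _ => (1:ℝ)) t * φ t)
      = Set.indicator K φ := by
    funext t
    by_cases ht : t ∈ K
    · simp [Set.indicator_of_mem ht]
    · simp [Set.indicator_of_notMem ht]
  rw [h2] at h1
  exact (integrable_indicator_iff hK.measurableSet).1 h1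

lemma kN_abs (Φ : BFS) (φ : ℝ → ℝ) : kN Φ (fun t => |φ t|) = kN Φ φ := by
  unfold kN
  congr 1
  ext r
  constructor
  · rintro ⟨f, hf1, hf2, rfl⟩
    refine ⟨f, hf1, hf2, ?_⟩
    congr 1
    funext t
    rw [abs_mul, abs_mul, abs_abs]
  · rintro ⟨f, hf1, hf2, rfl⟩
    refine ⟨f, hf1, hf2, ?_⟩
    congr 1
    funext t
    rw [abs_mul, abs_mul, abs_abs]

lemma exists_interval_pos {f : ℝ → ℝ} (hloc : LocallyIntegrable f volume)
    (h0 : ¬ (f =ᵐ[volume] (fun _ => (0:ℝ)))) :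
    ∃ a₀ b₀ : ℝ, a₀ < b₀ ∧ 0 < ∫ t in Set.Ioc a₀ b₀, |f t| := by
  by_contra hc
  push_neg at hc
  apply h0
  have habs : LocallyIntegrable (fun s => |f s|) volume := by
    have hm : AEStronglyMeasurable (fun s => |f s|) volume := by
      have := hloc.aestronglyMeasurable.norm
      simpa [Real.norm_eq_abs] using this
    apply hloc.mono hm
    filter_upwards with x
    simp [Real.norm_eq_abs]
  have hn : ∀ n : ℕ, ∀ᵐ t ∂volume, t ∈ Set.Ioc (-(n:ℝ)-1) (n+1) → f t = 0 := by
    intro n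
    have hab : (-(n:ℝ)-1) < (n+1) := by
      have : (0:ℝ) ≤ n := Nat.cast_nonneg n
      linarith
    have hint : IntegrableOn (fun s => |f s|) (Set.Ioc (-(n:ℝ)-1) (n+1)) volume :=
      habs.integrableOn_Ioc'
    have hnn : 0 ≤ᵐ[volume.restrict (Set.Ioc (-(n:ℝ)-1) (n+1))] (fun s => |f s|) :=
      Filter.Eventually.of_forall (fun s => abs_nonneg _)
    have hz : ∫ t in Set.Ioc (-(n:ℝ)-1) (n+1), |f t| = 0 :=
      le_antisymm (hc _ _ hab) (setIntegral_nonneg measurableSet_Ioc (fun s _ => abs_nonneg _))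
    have h3 := (setIntegral_eq_zero_iff_of_nonneg_ae hnn hint).1 hz
    have h4 : ∀ᵐ t ∂(volume.restrict (Set.Ioc (-(n:ℝ)-1) (n+1))), |f t| = (0:ℝ) := h3
    rw [ae_restrict_iff' measurableSet_Ioc] at h4
    filter_upwards [h4] with t ht hmem
    have h5 := ht hmem
    simpa [abs_eq_zero] using h5
  rw [← ae_all_iff] at hn
  filter_upwards [hn] with t ht
  obtain ⟨n, hn'⟩ := exists_nat_gt |t|
  apply ht n
  constructor
  · have := neg_abs_le t; linarith
  · have := le_abs_self t; linarith

lemma setIntegral_pos_of_ae_pos {f : ℝ → ℝ} {a b : ℝ} (hab : a < b)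
    (hint : IntegrableOn f (Set.Ioc a b) volume) (hpos : ∀ᵐ t ∂volume, 0 < f t) :
    0 < ∫ t in Set.Ioc a b, f t := by
  have hnn : 0 ≤ᵐ[volume.restrict (Set.Ioc a b)] f :=
    ae_restrict_of_ae (hpos.mono (fun t ht => ht.le))
  rw [setIntegral_pos_iff_support_of_nonneg_ae hnn hint]
  have hnull : volume (Set.Ioc a b \ Function.support f) = 0 := by
    have h1 : volume {t | ¬ (0 < f t)} = 0 := hpos
    apply measure_mono_null _ h1
    intro t ht
    simp only [Set.mem_setOf_eq]
    have h2 : f t = 0 := by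
      have h3 := ht.2
      rwa [Function.mem_support, not_not] at h3
    rw [h2]
    exact lt_irrefl 0
  have heq : Function.support f ∩ Set.Ioc a b
      = Set.Ioc a b \ (Set.Ioc a b \ Function.support f) := by
    ext t
    by_cases h1 : t ∈ Function.support f <;> by_cases h2 : t ∈ Set.Ioc a b <;>
      simp [h1, h2]
  rw [heq, measure_diff_null hnull, Real.volume_Ioc]
  exact ENNReal.ofReal_pos.2 (by linarith)

lemma rpow_alg {α β C₁ C₂ p : ℝ} (hα : 0 < α) (hβ : 0 < β) (h1 : 0 < C₁) (h2 : 0 < C₂)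
    (hp : 1 < p) :
    ((α/(2*C₁))^(1-p) * β) * (((β/(2*C₂))^(-(p-1)⁻¹)) * α)^(p-1)
      = 2^p * C₁^(p-1) * C₂ := by
  have hp1 : (0:ℝ) < p - 1 := by linarith
  have h2C₁ : (0:ℝ) < 2*C₁ := by linarith
  have h2C₂ : (0:ℝ) < 2*C₂ := by linarith
  have hbd : (0:ℝ) < β/(2*C₂) := div_pos hβ h2C₂
  -- second factor
  have hstep1 : (((β/(2*C₂))^(-(p-1)⁻¹)) * α)^(p-1)
      = (β/(2*C₂))⁻¹ * α^(p-1) := by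
    rw [Real.mul_rpow (Real.rpow_nonneg hbd.le _) hα.le]
    congr 1
    rw [← Real.rpow_mul hbd.le]
    rw [show (-(p-1)⁻¹) * (p-1) = -1 by field_simp]
    exact Real.rpow_neg_one _
  have hstep2 : (α/(2*C₁))^(1-p) = (2*C₁)^(p-1) / α^(p-1) := by
    rw [show (1-p) = -(p-1) by ring, Real.rpow_neg (div_pos hα h2C₁).le,
        Real.div_rpow hα.le h2C₁.le, inv_div]
  rw [hstep1, hstep2, inv_div]
  have hXpos : (0:ℝ) < α^(p-1) := Real.rpow_pos_of_pos hα _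
  have h2C1p : (2*C₁)^(p-1) = 2^(p-1) * C₁^(p-1) := Real.mul_rpow (by norm_num) h1.le
  have h2p : (2:ℝ)^p = (2:ℝ)^(p-1) * 2 := by
    have h := Real.rpow_add (by norm_num : (0:ℝ) < 2) (p-1) 1
    rw [Real.rpow_one] at h
    rw [← h]
    norm_num
  rw [h2C1p, h2p]
  field_simp

end Aux5

section Aux6
open Set MeasureTheory

lemma volume_Ioc_lt_top {a b : ℝ} : volume (Set.Ioc a b) < ⊤ := by
  rw [Real.volume_Ioc]; exact ENNReal.ofReal_lt_top

lemma indOI_mem (Φ : BFS) (hBS : Φ.IsBS) : Φ.Mem indOI :=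
  hBS.indicator_mem (Set.Ioc 0 1) measurableSet_Ioc volume_Ioc_lt_top

lemma mwt_mem_Phi (Φ : BFS) (hBS : Φ.IsBS) {C₁ : ℝ} (hM : MBoundedOn Φ.Mem Φ.N C₁) :
    Φ.Mem mwt := by
  have hH := (hM indOI (indOI_mem Φ hBS)).1
  apply Φ.ideal mwt (HLM indOI) mwt_continuous.aestronglyMeasurable hH
  filter_upwards with t
  rw [abs_of_pos (mwt_pos t), abs_of_nonneg (HLM_nonneg _ _)]
  exact mwt_le_HLM_indOI t

lemma indOI_kMem (Φ : BFS) (hBS : Φ.IsBS) : kMem Φ indOI := by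
  refine ⟨?_, ?_⟩
  · exact (measurable_const.indicator measurableSet_Ioc).aestronglyMeasurable
  · intro f hf
    obtain ⟨Ce, hCe⟩ := hBS.loc_int (Set.Ioc 0 1) measurableSet_Ioc volume_Ioc_lt_top
    have h1 : IntegrableOn f (Set.Ioc (0:ℝ) 1) volume := (hCe f hf).1
    have h2 : (fun t => f t * indOI t) = Set.indicator (Set.Ioc (0:ℝ) 1) f := by
      funext t
      unfold indOI
      by_cases ht : t ∈ Set.Ioc (0:ℝ) 1
      · simp [Set.indicator_of_mem ht]
      · simp [Set.indicator_of_notMem ht]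
    rw [h2]
    exact (integrable_indicator_iff measurableSet_Ioc).2 h1

lemma mwt_kMem (Φ : BFS) (hBS : Φ.IsBS) {C₂ : ℝ} (hM' : MBoundedOn (kMem Φ) (kN Φ) C₂) :
    kMem Φ mwt := by
  have hH := (hM' indOI (indOI_kMem Φ hBS)).1
  apply hH.ideal' mwt_continuous.aestronglyMeasurable
  filter_upwards with t
  rw [abs_of_pos (mwt_pos t), abs_of_nonneg (HLM_nonneg _ _)]
  exact mwt_le_HLM_indOI t

lemma goodSeq_Phi (Φ : BFS) (hBS : Φ.IsBS) {C₁ C₂ : ℝ} (hC₁ : 0 < C₁)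
    (hM : MBoundedOn Φ.Mem Φ.N C₁) (hM' : MBoundedOn (kMem Φ) (kN Φ) C₂)
    {g : ℝ → ℝ} (hg : Φ.Mem g) :
    GoodSeq C₁ (fun k => (fun f => HLM f)^[k] (fun s => |g s|)) := by
  set q : ℕ → ℝ → ℝ := fun k => (fun f => HLM f)^[k] (fun s => |g s|) with hqdef
  have hsucc : ∀ k, q (k+1) = HLM (q k) := fun k => Function.iterate_succ_apply' _ _ _
  have hmemN : ∀ k, Φ.Mem (q k) ∧ Φ.N (q k) ≤ C₁^k * Φ.N g := by
    intro k
    induction k with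
    | zero =>
      refine ⟨Φ.mem_abs hg, ?_⟩
      rw [pow_zero, one_mul]
      exact Φ.norm_abs_le hg
    | succ k ih =>
      rw [hsucc k]
      obtain ⟨ih1, ih2⟩ := ih
      obtain ⟨hm, hn⟩ := hM (q k) ih1
      refine ⟨hm, ?_⟩
      calc Φ.N (HLM (q k)) ≤ C₁ * Φ.N (q k) := hn
        _ ≤ C₁ * (C₁^k * Φ.N g) := mul_le_mul_of_nonneg_left ih2 hC₁.le
        _ = C₁^(k+1) * Φ.N g := by ring
  have hnn : ∀ k t, 0 ≤ q k t := by
    intro k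
    cases k with
    | zero => exact fun t => abs_nonneg _
    | succ k =>
      rw [hsucc k]
      exact fun t => HLM_nonneg _ _
  refine ⟨hC₁, fun k => Φ.mem_meas _ (hmemN k).1, hnn, hsucc,
    fun k => Φ.locallyIntegrable hBS (hmemN k).1,
    fun k => (mwt_kMem Φ hBS hM').2 _ (hmemN k).1, ?_⟩
  intro a b hab
  obtain ⟨Ce, hCe⟩ := hBS.loc_int (Set.Ioc a b) measurableSet_Ioc volume_Ioc_lt_top
  refine ⟨max Ce 0 * Φ.N g, mul_nonneg (le_max_right _ _) (Φ.norm_nonneg' g), ?_⟩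
  intro k
  have h1 : ∫ t in Set.Ioc a b, q k t = ∫ t in Set.Ioc a b, |q k t| := by
    apply integral_congr_ae
    filter_upwards with t
    rw [abs_of_nonneg (hnn k t)]
  have h2 := (hCe (q k) (hmemN k).1).2
  calc ∫ t in Set.Ioc a b, q k t ≤ Ce * Φ.N (q k) := by rw [h1]; exact h2
    _ ≤ max Ce 0 * Φ.N (q k) :=
        mul_le_mul_of_nonneg_right (le_max_left _ _) (Φ.norm_nonneg' _)
    _ ≤ max Ce 0 * (C₁^k * Φ.N g) := mul_le_mul_of_nonneg_left (hmemN k).2 (le_max_right _ _)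
    _ = (max Ce 0 * Φ.N g) * C₁^k := by ring

lemma goodSeq_Phi' (Φ : BFS) (hBS : Φ.IsBS) {C₁ C₂ : ℝ} (hC₂ : 0 < C₂)
    (hM : MBoundedOn Φ.Mem Φ.N C₁) (hM' : MBoundedOn (kMem Φ) (kN Φ) C₂)
    {h : ℝ → ℝ} (hh : kMem Φ h) :
    GoodSeq C₂ (fun k => (fun f => HLM f)^[k] (fun s => |h s|)) := by
  set q : ℕ → ℝ → ℝ := fun k => (fun f => HLM f)^[k] (fun s => |h s|) with hqdef
  have hsucc : ∀ k, q (k+1) = HLM (q k) := fun k => Function.iterate_succ_apply' _ _ _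
  have habs : kMem Φ (fun s => |h s|) := by
    apply hh.ideal'
    · have := hh.1.norm
      simpa [Real.norm_eq_abs] using this
    · filter_upwards with t; simp
  have hmemN : ∀ k, kMem Φ (q k) ∧ kN Φ (q k) ≤ C₂^k * kN Φ h := by
    intro k
    induction k with
    | zero =>
      refine ⟨habs, ?_⟩
      rw [pow_zero, one_mul]
      have : kN Φ (q 0) = kN Φ h := kN_abs Φ h
      rw [this]
    | succ k ih =>
      rw [hsucc k]
      obtain ⟨ih1, ih2⟩ := ih
      obtain ⟨hm, hn⟩ := hM' (q k) ih1
      refine ⟨hm, ?_⟩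
      calc kN Φ (HLM (q k)) ≤ C₂ * kN Φ (q k) := hn
        _ ≤ C₂ * (C₂^k * kN Φ h) := mul_le_mul_of_nonneg_left ih2 hC₂.le
        _ = C₂^(k+1) * kN Φ h := by ring
  have hnn : ∀ k t, 0 ≤ q k t := by
    intro k
    cases k with
    | zero => exact fun t => abs_nonneg _
    | succ k =>
      rw [hsucc k]
      exact fun t => HLM_nonneg _ _
  refine ⟨hC₂, fun k => ((hmemN k).1).1, hnn, hsucc,
    fun k => kMem.locallyIntegrable hBS (hmemN k).1, ?_, ?_⟩
  · intro k
    have h1 := ((hmemN k).1).2 mwt (mwt_mem_Phi Φ hBS hM)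
    apply h1.congr
    filter_upwards with t
    ring
  · intro a b hab
    set ind : ℝ → ℝ := Set.indicator (Set.Ioc a b) (fun _ => (1:ℝ)) with hind
    have hindmem : Φ.Mem ind := hBS.indicator_mem _ measurableSet_Ioc volume_Ioc_lt_top
    refine ⟨Φ.N ind * kN Φ h,
      mul_nonneg (Φ.norm_nonneg' _) (kN_nonneg Φ hBS hh), ?_⟩
    intro k
    have hhold := kN_holder Φ hBS (hmemN k).1 hindmem
    have heq : (fun t => |ind t * q k t|) = Set.indicator (Set.Ioc a b) (q k) := by
      funext t
      by_cases ht : t ∈ Set.Ioc a b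
      · simp [hind, Set.indicator_of_mem ht, abs_of_nonneg (hnn k t)]
      · simp [hind, Set.indicator_of_notMem ht]
    have heq2 : ∫ t, |ind t * q k t| = ∫ t in Set.Ioc a b, q k t := by
      rw [heq, integral_indicator measurableSet_Ioc]
    rw [heq2] at hhold
    calc ∫ t in Set.Ioc a b, q k t ≤ Φ.N ind * kN Φ (q k) := hhold
      _ ≤ Φ.N ind * (C₂^k * kN Φ h) :=
          mul_le_mul_of_nonneg_left (hmemN k).2 (Φ.norm_nonneg' _)
      _ = (Φ.N ind * kN Φ h) * C₂^k := by ring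

end Aux6

/-- If the Hardy–Littlewood maximal operator is bounded on a Banach function
space `Φ` (with norm `C₁`) and on its Köthe dual `Φ'` (with norm `C₂`), then for `1 < p < ∞`,
`0 ≠ g ∈ Φ` and `0 ≠ h ∈ Φ'`, the weight `w = (ℛg)^{1-p}·ℛ'h` built from the Rubio de Francia
iteration operators is an `A_p` weight with `[w]_{A_p} ≤ 2^p ‖M‖_Φ^{p-1} ‖M‖_{Φ'}`. -/
theorem statement1 (Φ : BFS) (hBS : Φ.IsBS) (C₁ C₂ : ℝ) (hC₁ : 0 < C₁) (hC₂ : 0 < C₂)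
    (hM : MBoundedOn Φ.Mem Φ.N C₁) (hM' : MBoundedOn (kMem Φ) (kN Φ) C₂)
    (p : ℝ) (hp : 1 < p)
    (g : ℝ → ℝ) (hg : Φ.Mem g) (hg0 : ¬ (g =ᵐ[volume] (fun _ => (0:ℝ))))
    (h : ℝ → ℝ) (hh : kMem Φ h) (hh0 : ¬ (h =ᵐ[volume] (fun _ => (0:ℝ)))) :
    IsAp p (fun t => (RdF C₁ g t) ^ (1 - p) * RdF C₂ h t)
      (2 ^ p * C₁ ^ (p - 1) * C₂) := by
  classical
  have hp1 : (0:ℝ) < p - 1 := by linarith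
  have hp1' : p - 1 ≠ 0 := ne_of_gt hp1
  have h2C₁ : (0:ℝ) < 2*C₁ := by linarith
  have h2C₂ : (0:ℝ) < 2*C₂ := by linarith
  set q₁ : ℕ → ℝ → ℝ := fun k => (fun f => HLM f)^[k] (fun s => |g s|) with hq₁
  set q₂ : ℕ → ℝ → ℝ := fun k => (fun f => HLM f)^[k] (fun s => |h s|) with hq₂
  have hG₁ : GoodSeq C₁ q₁ := goodSeq_Phi Φ hBS hC₁ hM hM' hg
  have hG₂ : GoodSeq C₂ q₂ := goodSeq_Phi' Φ hBS hC₂ hM hM' hh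
  set u : ℝ → ℝ := Rsum C₁ q₁ with hu
  set v : ℝ → ℝ := Rsum C₂ q₂ with hv
  set e : ℝ := -(p-1)⁻¹ with he
  have he_neg : e ≤ 0 := by
    rw [he]
    have h1 : (0:ℝ) < (p-1)⁻¹ := inv_pos.2 hp1
    linarith
  show IsAp p (fun t => u t ^ (1 - p) * v t) (2 ^ p * C₁ ^ (p - 1) * C₂)
  set w : ℝ → ℝ := fun t => u t ^ (1-p) * v t with hwdef
  have hpos₁ : ∀ᵐ t ∂volume, 0 < u t := by
    apply hG₁.ae_pos
    obtain ⟨a₀, b₀, hab, hps⟩ := exists_interval_pos (Φ.locallyIntegrable hBS hg) hg0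
    exact ⟨a₀, b₀, hab, hps⟩
  have hpos₂ : ∀ᵐ t ∂volume, 0 < v t := by
    apply hG₂.ae_pos
    obtain ⟨a₀, b₀, hab, hps⟩ := exists_interval_pos (kMem.locallyIntegrable hBS hh) hh0
    exact ⟨a₀, b₀, hab, hps⟩
  have humeas : AEMeasurable u volume := by
    apply AEMeasurable.congr (ENNReal.measurable_toReal.comp_aemeasurable hG₁.aemeas')
    filter_upwards [hG₁.ae_summable] with t ht
    exact ht.2.symm
  have hvmeas : AEMeasurable v volume := by
    apply AEMeasurable.congr (ENNReal.measurable_toReal.comp_aemeasurable hG₂.aemeas')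
    filter_upwards [hG₂.ae_summable] with t ht
    exact ht.2.symm
  have hunn : ∀ t, 0 ≤ u t := fun t => hG₁.Rsum_nonneg t
  have hvnn : ∀ t, 0 ≤ v t := fun t => hG₂.Rsum_nonneg t
  have hwnn : ∀ t, 0 ≤ w t :=
    fun t => mul_nonneg (Real.rpow_nonneg (hunn t) _) (hvnn t)
  have hwmeas : AEStronglyMeasurable w volume := by
    rw [aestronglyMeasurable_iff_aemeasurable]
    exact (humeas.pow aemeasurable_const).mul hvmeas
  have hσnn : ∀ t, 0 ≤ (w t)^e := fun t => Real.rpow_nonneg (hwnn t) e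
  have hσmeas : AEStronglyMeasurable (fun t => (w t)^e) volume := by
    rw [aestronglyMeasurable_iff_aemeasurable]
    exact (hwmeas.aemeasurable).pow aemeasurable_const
  -- the per-interval facts
  have key : ∀ a b : ℝ, a < b → IntegrableOn w (Set.Ioc a b) volume ∧
      apRatio p w a b ≤ 2^p * C₁^(p-1) * C₂ := by
    intro a b hab
    have hl : (0:ℝ) < b - a := sub_pos.2 hab
    have hUint : IntegrableOn u (Set.Ioc a b) volume := hG₁.integrableOn hab
    have hVint : IntegrableOn v (Set.Ioc a b) volume := hG₂.integrableOn hab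
    have hU : 0 < ∫ t in Set.Ioc a b, u t := setIntegral_pos_of_ae_pos hab hUint hpos₁
    have hV : 0 < ∫ t in Set.Ioc a b, v t := setIntegral_pos_of_ae_pos hab hVint hpos₂
    set α : ℝ := (b-a)⁻¹ * ∫ t in Set.Ioc a b, u t with hα
    set β : ℝ := (b-a)⁻¹ * ∫ t in Set.Ioc a b, v t with hβ
    have hαpos : 0 < α := mul_pos (inv_pos.2 hl) hU
    have hβpos : 0 < β := mul_pos (inv_pos.2 hl) hV
    have hcupos : 0 < α/(2*C₁) := div_pos hαpos h2C₁
    have hcvpos : 0 < β/(2*C₂) := div_pos hβpos h2C₂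
    have haeI : ∀ᵐ t ∂(volume.restrict (Set.Ioc a b)),
        0 < u t ∧ 0 < v t ∧ α/(2*C₁) ≤ u t ∧ β/(2*C₂) ≤ v t := by
      rw [ae_restrict_iff' measurableSet_Ioc]
      filter_upwards [hpos₁, hpos₂, hG₁.ae_main, hG₂.ae_main] with t h1 h2 h3 h4 hmem
      have hmem' : t ∈ Set.Icc a b := Set.Ioc_subset_Icc_self hmem
      have h5 : α ≤ 2*C₁ * u t := h3.2.1 a b hab hmem'
      have h6 : β ≤ 2*C₂ * v t := h4.2.1 a b hab hmem'
      refine ⟨h1, h2, ?_, ?_⟩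
      · rw [div_le_iff₀ h2C₁]
        calc α ≤ 2*C₁ * u t := h5
          _ = u t * (2*C₁) := by ring
      · rw [div_le_iff₀ h2C₂]
        calc β ≤ 2*C₂ * v t := h6
          _ = v t * (2*C₂) := by ring
    have hwle : ∀ᵐ t ∂(volume.restrict (Set.Ioc a b)), w t ≤ (α/(2*C₁))^(1-p) * v t := by
      filter_upwards [haeI] with t ht
      obtain ⟨h1, h2, h3, h4⟩ := ht
      apply mul_le_mul_of_nonneg_right _ h2.le
      exact Real.rpow_le_rpow_of_nonpos hcupos h3 (by linarith)
    have hwint : IntegrableOn w (Set.Ioc a b) volume := by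
      apply Integrable.mono (hVint.const_mul ((α/(2*C₁))^(1-p))) hwmeas.restrict
      filter_upwards [hwle, haeI] with t hle ht
      obtain ⟨h1, h2, h3, h4⟩ := ht
      rw [Real.norm_eq_abs, Real.norm_eq_abs, abs_of_nonneg (hwnn t),
        abs_of_nonneg (mul_nonneg (Real.rpow_nonneg hcupos.le _) h2.le)]
      exact hle
    have hIw : ∫ t in Set.Ioc a b, w t ≤ (α/(2*C₁))^(1-p) * ∫ t in Set.Ioc a b, v t := by
      have h7 := integral_mono_ae hwint (hVint.const_mul ((α/(2*C₁))^(1-p))) hwle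
      rwa [integral_const_mul] at h7
    have hσle : ∀ᵐ t ∂(volume.restrict (Set.Ioc a b)),
        (w t)^e ≤ (β/(2*C₂))^e * u t := by
      filter_upwards [haeI] with t ht
      obtain ⟨h1, h2, h3, h4⟩ := ht
      have hwt : w t = u t^(1-p) * v t := rfl
      have hsplit : (w t)^e = (u t^(1-p))^e * (v t)^e := by
        rw [hwt, Real.mul_rpow (Real.rpow_nonneg h1.le _) h2.le]
      have hu1 : (u t^(1-p))^e = u t := by
        rw [← Real.rpow_mul h1.le]
        rw [show (1-p)*e = 1 by rw [he]; field_simp; ring]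
        exact Real.rpow_one _
      rw [hsplit, hu1]
      have h5 : (v t)^e ≤ (β/(2*C₂))^e := Real.rpow_le_rpow_of_nonpos hcvpos h4 he_neg
      calc u t * (v t)^e ≤ u t * (β/(2*C₂))^e := mul_le_mul_of_nonneg_left h5 h1.le
        _ = (β/(2*C₂))^e * u t := by ring
    have hσint : IntegrableOn (fun t => (w t)^e) (Set.Ioc a b) volume := by
      apply Integrable.mono (hUint.const_mul ((β/(2*C₂))^e)) hσmeas.restrict
      filter_upwards [hσle, haeI] with t hle ht
      obtain ⟨h1, h2, h3, h4⟩ := ht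
      rw [Real.norm_eq_abs, Real.norm_eq_abs, abs_of_nonneg (hσnn t),
        abs_of_nonneg (mul_nonneg (Real.rpow_nonneg hcvpos.le _) h1.le)]
      exact hle
    have hIσ : ∫ t in Set.Ioc a b, (w t)^e ≤ (β/(2*C₂))^e * ∫ t in Set.Ioc a b, u t := by
      have h7 := integral_mono_ae hσint (hUint.const_mul ((β/(2*C₂))^e)) hσle
      rwa [integral_const_mul] at h7
    refine ⟨hwint, ?_⟩
    unfold apRatio
    rw [← he]
    have hfac1 : (b-a)⁻¹ * ∫ t in Set.Ioc a b, w t ≤ (α/(2*C₁))^(1-p) * β := by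
      calc (b-a)⁻¹ * ∫ t in Set.Ioc a b, w t
          ≤ (b-a)⁻¹ * ((α/(2*C₁))^(1-p) * ∫ t in Set.Ioc a b, v t) :=
            mul_le_mul_of_nonneg_left hIw (by positivity)
        _ = (α/(2*C₁))^(1-p) * β := by rw [hβ]; ring
    have hfac1nn : 0 ≤ (b-a)⁻¹ * ∫ t in Set.Ioc a b, w t :=
      mul_nonneg (by positivity) (setIntegral_nonneg measurableSet_Ioc (fun t _ => hwnn t))
    have hfac2 : (b-a)⁻¹ * ∫ t in Set.Ioc a b, (w t)^e ≤ (β/(2*C₂))^e * α := by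
      calc (b-a)⁻¹ * ∫ t in Set.Ioc a b, (w t)^e
          ≤ (b-a)⁻¹ * ((β/(2*C₂))^e * ∫ t in Set.Ioc a b, u t) :=
            mul_le_mul_of_nonneg_left hIσ (by positivity)
        _ = (β/(2*C₂))^e * α := by rw [hα]; ring
    have hfac2nn : 0 ≤ (b-a)⁻¹ * ∫ t in Set.Ioc a b, (w t)^e :=
      mul_nonneg (by positivity) (setIntegral_nonneg measurableSet_Ioc (fun t _ => hσnn t))
    have hfac2' : ((b-a)⁻¹ * ∫ t in Set.Ioc a b, (w t)^e)^(p-1)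
        ≤ ((β/(2*C₂))^e * α)^(p-1) :=
      Real.rpow_le_rpow hfac2nn hfac2 (by linarith)
    calc ((b-a)⁻¹ * ∫ t in Set.Ioc a b, w t) * ((b-a)⁻¹ * ∫ t in Set.Ioc a b, (w t)^e)^(p-1)
        ≤ ((α/(2*C₁))^(1-p) * β) * (((β/(2*C₂))^e) * α)^(p-1) := by
          apply mul_le_mul hfac1 hfac2' (Real.rpow_nonneg hfac2nn _)
          exact mul_nonneg (Real.rpow_nonneg hcupos.le _) hβpos.le
      _ = 2^p * C₁^(p-1) * C₂ := by
          rw [he]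
          exact rpow_alg hαpos hβpos hC₁ hC₂ hp
  refine ⟨?_, ?_, ?_⟩
  · filter_upwards [hpos₁, hpos₂] with t h1 h2
    exact mul_pos (Real.rpow_pos_of_pos h1 _) h2
  · rw [locallyIntegrable_iff]
    intro K hK
    obtain ⟨r, hr⟩ := hK.isBounded.subset_closedBall 0
    have hab : -(|r|+1) < (|r|+1) := by
      have := abs_nonneg r
      linarith
    have hKsub : K ⊆ Set.Ioc (-(|r|+1)) (|r|+1) := by
      intro x hx
      have h1 := hr hx
      rw [Metric.mem_closedBall, Real.dist_eq, sub_zero] at h1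
      have h2 := abs_le.1 (le_trans h1 (le_abs_self r))
      constructor
      · linarith [h2.1]
      · linarith [h2.2]
    exact ((key _ _ hab).1).mono_set hKsub
  · intro a b hab
    exact (key a b hab).2
end
end

section
/- Let X, Y be Banach spaces with Y continuously embedded in X. Let A, B, P ∈ L(Y, X) and let ĉ: ℝ∖{0} → L(Y,X) satisfy the 𝔐₁-condition (ĉ and t·ĉ'(t) uniformly bounded). Suppose b(t) := −t²P + itB + A + ĉ(t) is invertible in L(Y,X) for all t ≠ 0, and that a(t) := b(t)^{-1} is bounded in L(X,Y) while a₀(t) := tB a(t) and a₁(t) := t²P a(t) are bounded in L(X). Then a satisfies the 𝔐₁-condition in L(X,Y): sup_{t≠0} ‖t a'(t)‖_{L(X,Y)} < ∞, via the identity −a'(t) = a(t) b'(t) a(t) with b'(t) = −2tP + iB + ĉ'(t). -/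
open MeasureTheory Filter Topology

noncomputable section

set_option maxHeartbeats 1000000 in
/-- Let `Y ↪ X` be Banach spaces, `A, B, P ∈ L(Y,X)`, and let
`ĉ : ℝ∖{0} → L(Y,X)` satisfy the `𝔐₁`-condition. If `b(t) = −t²P + itB + A + ĉ(t)` is
invertible for all `t ≠ 0` with `a = b⁻¹` bounded in `L(X,Y)` and `a₀(t) = tBa(t)`,
`a₁(t) = t²Pa(t)` bounded in `L(X)`, then `a` satisfies the `𝔐₁`-condition:
`sup_{t≠0}‖t a'(t)‖ < ∞`, via the identity `−a'(t) = a(t) b'(t) a(t)` with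
`b'(t) = −2tP + iB + ĉ'(t)`. -/
theorem statement11 (X Y : Type*)
    [NormedAddCommGroup X] [NormedSpace ℂ X] [CompleteSpace X]
    [NormedAddCommGroup Y] [NormedSpace ℂ Y] [CompleteSpace Y]
    (J : Y →L[ℂ] X) (hJ : Function.Injective J)
    (A B P : Y →L[ℂ] X) (c c' : ℝ → Y →L[ℂ] X) (K : ℝ)
    (hc : ∀ t : ℝ, t ≠ 0 → HasDerivAt c (c' t) t)
    (hcK : ∀ t : ℝ, t ≠ 0 → ‖c t‖ ≤ K ∧ |t| * ‖c' t‖ ≤ K)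
    (a : ℝ → X →L[ℂ] Y)
    (hinv : ∀ t : ℝ, t ≠ 0 →
      ((-(t:ℂ) ^ 2) • P + (Complex.I * (t:ℂ)) • B + A + c t).comp (a t) =
          ContinuousLinearMap.id ℂ X ∧
        (a t).comp ((-(t:ℂ) ^ 2) • P + (Complex.I * (t:ℂ)) • B + A + c t) =
          ContinuousLinearMap.id ℂ Y)
    (Ka : ℝ)
    (ha : ∀ t : ℝ, t ≠ 0 → ‖a t‖ ≤ Ka)
    (ha0 : ∀ t : ℝ, t ≠ 0 → |t| * ‖B.comp (a t)‖ ≤ Ka)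
    (ha1 : ∀ t : ℝ, t ≠ 0 → t ^ 2 * ‖P.comp (a t)‖ ≤ Ka) :
    ∃ a' : ℝ → X →L[ℂ] Y,
      (∀ t : ℝ, t ≠ 0 → HasDerivAt a (a' t) t) ∧
      (∀ t : ℝ, t ≠ 0 →
        a' t = -((a t).comp ((((-2 * t : ℂ)) • P + Complex.I • B + c' t).comp (a t)))) ∧
      ∃ K' : ℝ, ∀ t : ℝ, t ≠ 0 → |t| * ‖a' t‖ ≤ K' := by
  classical
  set b : ℝ → Y →L[ℂ] X := fun t => (-(t:ℂ) ^ 2) • P + (Complex.I * (t:ℂ)) • B + A + c t with hbdef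
  set b' : ℝ → Y →L[ℂ] X := fun t => ((-2 * t : ℂ)) • P + Complex.I • B + c' t with hb'def
  have hbderiv : ∀ t : ℝ, t ≠ 0 → HasDerivAt b (b' t) t := by
    intro t ht
    have h1c : HasDerivAt (fun s : ℝ => -(s:ℂ) ^ 2) ((-2 * t : ℂ)) t := by
      have h : HasDerivAt (fun w : ℂ => -w ^ 2) ((-2 * t : ℂ)) (t:ℂ) := by
        have := (hasDerivAt_pow 2 (t:ℂ)).fun_neg
        exact this.congr_deriv (by norm_num)
      exact h.comp_ofReal
    have h2c : HasDerivAt (fun s : ℝ => Complex.I * (s:ℂ)) Complex.I t := by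
      have h : HasDerivAt (fun w : ℂ => Complex.I * w) Complex.I (t:ℂ) := by
        simpa using (hasDerivAt_id (t:ℂ)).const_mul Complex.I
      exact h.comp_ofReal
    have h := (((h1c.smul_const P).add (h2c.smul_const B)).add (hasDerivAt_const t A)).add
      (hc t ht)
    have hval : b' t = ((-2 * t : ℂ)) • P + Complex.I • B + 0 + c' t := by
      simp only [hb'def]
      abel
    rw [hval]
    exact h
  have hstep : ∀ s : ℝ, s ≠ 0 → ContinuousLinearMap.inverse (b s) = a s := by
    intro s hs
    have h1 : Function.LeftInverse (a s) (b s) := fun y => DFunLike.congr_fun (hinv s hs).2 y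
    have h2 : Function.RightInverse (a s) (b s) := fun x => DFunLike.congr_fun (hinv s hs).1 x
    have : ContinuousLinearMap.inverse
        ((ContinuousLinearEquiv.equivOfInverse (b s) (a s) h1 h2 : Y ≃L[ℂ] X) : Y →L[ℂ] X)
        = a s := by
      rw [ContinuousLinearMap.inverse_equiv]
      rfl
    exact this
  have hmain : ∀ t : ℝ, t ≠ 0 →
      HasDerivAt a (-((a t).comp ((b' t).comp (a t)))) t := by
    intro t ht
    have h1 : Function.LeftInverse (a t) (b t) := fun y => DFunLike.congr_fun (hinv t ht).2 y
    have h2 : Function.RightInverse (a t) (b t) := fun x => DFunLike.congr_fun (hinv t ht).1 x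
    have hdiffinv : DifferentiableAt ℂ ContinuousLinearMap.inverse (b t) :=
      (contDiffAt_map_inverse (𝕜 := ℂ) (n := 1)
        (ContinuousLinearEquiv.equivOfInverse (b t) (a t) h1 h2)).differentiableAt one_ne_zero
    have hmem : {s : ℝ | s ≠ 0} ∈ 𝓝 t := isOpen_ne.mem_nhds ht
    have hev : (fun s => ContinuousLinearMap.inverse (b s)) =ᶠ[𝓝 t] a :=
      Filter.eventually_of_mem hmem fun s hs => hstep s hs
    have hda : DifferentiableAt ℝ a t := by
      have hcomp : DifferentiableAt ℝ (fun s => ContinuousLinearMap.inverse (b s)) t :=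
        (hdiffinv.restrictScalars ℝ).comp t (hbderiv t ht).differentiableAt
      exact hcomp.congr_of_eventuallyEq hev.symm
    have hd : HasDerivAt a (deriv a t) t := hda.hasDerivAt
    set d := deriv a t with hddef
    -- restrict scalars to ℝ to use the Leibniz rule for composition
    set R1 : (X →L[ℂ] Y) →L[ℝ] (X →L[ℝ] Y) :=
      ContinuousLinearMap.restrictScalarsL ℂ X Y ℝ ℝ with hR1
    set R2 : (Y →L[ℂ] X) →L[ℝ] (Y →L[ℝ] X) :=
      ContinuousLinearMap.restrictScalarsL ℂ Y X ℝ ℝ with hR2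
    have hdR : HasDerivAt (fun s => R1 (a s)) (R1 d) t :=
      R1.hasFDerivAt.comp_hasDerivAt t hd
    have hbR : HasDerivAt (fun s => R2 (b s)) (R2 (b' t)) t :=
      R2.hasFDerivAt.comp_hasDerivAt t (hbderiv t ht)
    have hprodR : HasDerivAt (fun s => (R1 (a s)).comp (R2 (b s)))
        ((R1 d).comp (R2 (b t)) + (R1 (a t)).comp (R2 (b' t))) t := hdR.clm_comp hbR
    have hmem' : {s : ℝ | s ≠ 0} ∈ 𝓝 t := isOpen_ne.mem_nhds ht
    have hev2 : (fun s => (R1 (a s)).comp (R2 (b s))) =ᶠ[𝓝 t]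
        fun _ => ContinuousLinearMap.id ℝ Y := by
      refine Filter.eventually_of_mem hmem' fun s hs => ?_
      ext y
      exact DFunLike.congr_fun (hinv s hs).2 y
    have hzero : HasDerivAt (fun s => (R1 (a s)).comp (R2 (b s))) 0 t :=
      (hasDerivAt_const t (ContinuousLinearMap.id ℝ Y)).congr_of_eventuallyEq hev2
    have huniq : (R1 d).comp (R2 (b t)) + (R1 (a t)).comp (R2 (b' t)) = 0 :=
      hprodR.unique hzero
    have hdeq : d = -((a t).comp ((b' t).comp (a t))) := by
      ext x
      have h0 : d ((b t) ((a t) x)) + (a t) ((b' t) ((a t) x)) = 0 :=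
        DFunLike.congr_fun huniq ((a t) x)
      rw [h2 x] at h0
      simp only [ContinuousLinearMap.neg_apply, ContinuousLinearMap.comp_apply]
      exact eq_neg_of_add_eq_zero_left h0
    rw [← hdeq]
    exact hd
  have hKa0 : 0 ≤ Ka := le_trans (norm_nonneg _) (ha 1 one_ne_zero)
  have hK0 : 0 ≤ K := le_trans (norm_nonneg _) (hcK 1 one_ne_zero).1
  refine ⟨fun t => -((a t).comp ((b' t).comp (a t))), fun t ht => hmain t ht,
    fun t ht => rfl, Ka * (3 * Ka + K * Ka), fun t ht => ?_⟩
  have key : ((t:ℂ)) • ((b' t).comp (a t))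
      = ((-2 * t ^ 2 : ℝ) : ℂ) • (P.comp (a t)) + ((t:ℂ) * Complex.I) • (B.comp (a t))
        + (t:ℂ) • ((c' t).comp (a t)) := by
    simp only [hb'def, ContinuousLinearMap.add_comp, ContinuousLinearMap.smul_comp, smul_add,
      smul_smul]
    push_cast
    module
  have hn1 : ‖((-2 * t ^ 2 : ℝ) : ℂ)‖ = 2 * t ^ 2 := by
    rw [Complex.norm_real, Real.norm_eq_abs, abs_mul]
    simp [abs_of_nonneg (sq_nonneg t)]
  have hn2 : ‖(t:ℂ) * Complex.I‖ = |t| := by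
    simp
  have hn3 : ‖(t:ℂ)‖ = |t| := by simp
  have hbnd : |t| * ‖(b' t).comp (a t)‖ ≤ 3 * Ka + K * Ka := by
    have heq : |t| * ‖(b' t).comp (a t)‖ = ‖((t:ℂ)) • ((b' t).comp (a t))‖ := by
      rw [norm_smul ((t:ℂ)) ((b' t).comp (a t)), hn3]
    rw [heq, key]
    refine le_trans (norm_add₃_le) ?_
    have e1 : ‖((-2 * t ^ 2 : ℝ) : ℂ) • (P.comp (a t))‖ ≤ 2 * Ka := by
      rw [norm_smul (((-2 * t ^ 2 : ℝ) : ℂ)) (P.comp (a t)), hn1]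
      have := ha1 t ht
      nlinarith [norm_nonneg (P.comp (a t)), sq_nonneg t]
    have e2 : ‖((t:ℂ) * Complex.I) • (B.comp (a t))‖ ≤ Ka := by
      rw [norm_smul ((t:ℂ) * Complex.I) (B.comp (a t)), hn2]; exact ha0 t ht
    have e3 : ‖(t:ℂ) • ((c' t).comp (a t))‖ ≤ K * Ka := by
      rw [norm_smul ((t:ℂ)) ((c' t).comp (a t)), hn3]
      calc |t| * ‖(c' t).comp (a t)‖ ≤ |t| * (‖c' t‖ * ‖a t‖) :=
            mul_le_mul_of_nonneg_left (ContinuousLinearMap.opNorm_comp_le _ _) (abs_nonneg t)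
        _ = (|t| * ‖c' t‖) * ‖a t‖ := by ring
        _ ≤ K * Ka := mul_le_mul (hcK t ht).2 (ha t ht) (norm_nonneg _) hK0
    linarith
  calc |t| * ‖-((a t).comp ((b' t).comp (a t)))‖
      = |t| * ‖(a t).comp ((b' t).comp (a t))‖ := by rw [norm_neg]
    _ ≤ |t| * (‖a t‖ * ‖(b' t).comp (a t)‖) :=
        mul_le_mul_of_nonneg_left (ContinuousLinearMap.opNorm_comp_le _ _) (abs_nonneg t)
    _ = ‖a t‖ * (|t| * ‖(b' t).comp (a t)‖) := by ring
    _ ≤ Ka * (3 * Ka + K * Ka) := by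
        refine mul_le_mul (ha t ht) hbnd ?_ hKa0
        positivity
end
end

section
/- Let X, Y be Banach spaces with Y ↪ X, let A, B, P ∈ L(Y,X), and let γ ∈ ℕ. Suppose ĉ ∈ C^γ(ℝ∖{0}; L(Y,X)) satisfies the 𝔐_γ-condition, b(t) := −t²P + itB + A + ĉ(t) is invertible for all t ≠ 0, a := b^{-1} ∈ L^∞(ℝ∖{0}; L(X,Y)), and a₀(t) := tBa(t), a₁(t) := t²Pa(t) are in L^∞(ℝ∖{0}; L(X)). Then a satisfies the 𝔐_γ-condition in L(X,Y), and a₀, a₁ satisfy the 𝔐_γ-condition in L(X). -/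
open MeasureTheory Filter Topology

noncomputable section

/-- The `𝔐_γ`-condition (Mihlin condition of order `γ`) for a function on `ℝ∖{0}`:
`m ∈ C^γ(ℝ∖{0})` and `max_{0≤l≤γ} sup_{t≠0} ‖t^l m^{(l)}(t)‖ < ∞`. -/
def MihlinCond (γ : ℕ) {E : Type*} [NormedAddCommGroup E] [NormedSpace ℝ E]
    (m : ℝ → E) : Prop :=
  ContDiffOn ℝ (γ : ℕ∞) m {(0:ℝ)}ᶜ ∧
    ∃ K : ℝ, ∀ l ≤ γ, ∀ t : ℝ, t ≠ 0 →
      |t| ^ l * ‖iteratedDerivWithin l m {(0:ℝ)}ᶜ t‖ ≤ K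

section Stmt12Aux

open Set ContinuousLinearMap

local notation "S12S" => ({(0:ℝ)}ᶜ : Set ℝ)

lemma s12_open : IsOpen S12S := isOpen_compl_singleton
lemma s12_ud : UniqueDiffOn ℝ S12S := s12_open.uniqueDiffOn
lemma s12_mem {t : ℝ} (ht : t ≠ 0) : t ∈ S12S := ht

variable {E F G : Type*} [NormedAddCommGroup E] [NormedSpace ℝ E]
  [NormedAddCommGroup F] [NormedSpace ℝ F]
  [NormedAddCommGroup G] [NormedSpace ℝ G]

/-- Mihlin-type weighted bounds of order `n` with weight `w`. -/
def Good12 (n : ℕ) (w : ℤ) (f : ℝ → E) : Prop :=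
  ContDiffOn ℝ (n : ℕ∞) f {(0:ℝ)}ᶜ ∧
    ∃ K : ℝ, 0 ≤ K ∧ ∀ i, i ≤ n → ∀ t : ℝ, t ≠ 0 →
      |t| ^ (w + (i : ℤ)) * ‖iteratedDerivWithin i f {(0:ℝ)}ᶜ t‖ ≤ K

lemma Good12.of_eq {n : ℕ} {w : ℤ} {f : ℝ → E} (h : Good12 n w f) {w' : ℤ}
    (hw : w = w') : Good12 n w' f := hw ▸ h

lemma Good12.congr {n : ℕ} {w : ℤ} {f g : ℝ → E} (h : Good12 n w f)
    (hfg : EqOn f g S12S) : Good12 n w g := by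
  obtain ⟨hcd, K, hK0, hK⟩ := h
  refine ⟨hcd.congr fun x hx => (hfg hx).symm, K, hK0, fun i hi t ht => ?_⟩
  rw [← iteratedDerivWithin_congr hfg (s12_mem ht)]
  exact hK i hi t ht

lemma Good12.of_le {n m : ℕ} {w : ℤ} {f : ℝ → E} (h : Good12 n w f) (hm : m ≤ n) :
    Good12 m w f := by
  obtain ⟨hcd, K, hK0, hK⟩ := h
  exact ⟨hcd.of_le (by exact_mod_cast hm), K, hK0, fun i hi => hK i (hi.trans hm)⟩

lemma Good12.add {n : ℕ} {w : ℤ} {f g : ℝ → E} (hf : Good12 n w f) (hg : Good12 n w g) :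
    Good12 n w (fun t => f t + g t) := by
  obtain ⟨hfc, K₁, hK₁0, hK₁⟩ := hf
  obtain ⟨hgc, K₂, hK₂0, hK₂⟩ := hg
  refine ⟨hfc.add hgc, K₁ + K₂, by positivity, fun i hi t ht => ?_⟩
  have hadd : iteratedDerivWithin i (fun t => f t + g t) {(0:ℝ)}ᶜ t
      = iteratedDerivWithin i f {(0:ℝ)}ᶜ t + iteratedDerivWithin i g {(0:ℝ)}ᶜ t :=
    iteratedDerivWithin_add (s12_mem ht) s12_ud
      ((hfc t (s12_mem ht)).of_le (by exact_mod_cast hi)) ((hgc t (s12_mem ht)).of_le (by exact_mod_cast hi))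
  have h1 := hK₁ i hi t ht
  have h2 := hK₂ i hi t ht
  have hpos : (0:ℝ) ≤ |t| ^ (w + (i : ℤ)) := le_of_lt (zpow_pos (abs_pos.mpr ht) _)
  calc |t| ^ (w + (i : ℤ)) * ‖iteratedDerivWithin i (fun t => f t + g t) {(0:ℝ)}ᶜ t‖
      ≤ |t| ^ (w + (i : ℤ)) *
        (‖iteratedDerivWithin i f {(0:ℝ)}ᶜ t‖ + ‖iteratedDerivWithin i g {(0:ℝ)}ᶜ t‖) := by
        rw [hadd]; exact mul_le_mul_of_nonneg_left (norm_add_le _ _) hpos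
    _ = |t| ^ (w + (i : ℤ)) * ‖iteratedDerivWithin i f {(0:ℝ)}ᶜ t‖
        + |t| ^ (w + (i : ℤ)) * ‖iteratedDerivWithin i g {(0:ℝ)}ᶜ t‖ := by ring
    _ ≤ K₁ + K₂ := add_le_add h1 h2

lemma Good12.neg {n : ℕ} {w : ℤ} {f : ℝ → E} (hf : Good12 n w f) :
    Good12 n w (fun t => -f t) := by
  obtain ⟨hfc, K, hK0, hK⟩ := hf
  refine ⟨hfc.neg, K, hK0, fun i hi t ht => ?_⟩
  rw [iteratedDerivWithin_fun_neg f, norm_neg]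
  exact hK i hi t ht

lemma Good12.clm_left {n : ℕ} {w : ℤ} {f : ℝ → E} (L : E →L[ℝ] F) (h : Good12 n w f) :
    Good12 n w (fun t => L (f t)) := by
  obtain ⟨hcd, K, hK0, hK⟩ := h
  refine ⟨L.contDiff.comp_contDiffOn hcd, ‖L‖ * K, by positivity, fun i hi t ht => ?_⟩
  have hnorm : ‖iteratedDerivWithin i (fun t => L (f t)) {(0:ℝ)}ᶜ t‖
      ≤ ‖L‖ * ‖iteratedDerivWithin i f {(0:ℝ)}ᶜ t‖ := by
    rw [← norm_iteratedFDerivWithin_eq_norm_iteratedDerivWithin,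
        ← norm_iteratedFDerivWithin_eq_norm_iteratedDerivWithin,
        show (fun t => L (f t)) = (⇑L ∘ f) from rfl,
        L.iteratedFDerivWithin_comp_left (hcd t (s12_mem ht)) s12_ud (s12_mem ht) (by exact_mod_cast hi)]
    exact L.norm_compContinuousMultilinearMap_le _
  have hpos : (0:ℝ) ≤ |t| ^ (w + (i : ℤ)) := le_of_lt (zpow_pos (abs_pos.mpr ht) _)
  calc |t| ^ (w + (i : ℤ)) * ‖iteratedDerivWithin i (fun t => L (f t)) {(0:ℝ)}ᶜ t‖
      ≤ |t| ^ (w + (i : ℤ)) * (‖L‖ * ‖iteratedDerivWithin i f {(0:ℝ)}ᶜ t‖) :=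
        mul_le_mul_of_nonneg_left hnorm hpos
    _ = ‖L‖ * (|t| ^ (w + (i : ℤ)) * ‖iteratedDerivWithin i f {(0:ℝ)}ᶜ t‖) := by ring
    _ ≤ ‖L‖ * K := mul_le_mul_of_nonneg_left (hK i hi t ht) (norm_nonneg L)

lemma iteratedDerivWithin_const12 : ∀ (k : ℕ) (e : E) {t : ℝ}, t ∈ S12S →
    iteratedDerivWithin (k + 1) (fun _ : ℝ => e) S12S t = 0 := by
  intro k
  induction k with
  | zero =>
    intro e t ht
    rw [iteratedDerivWithin_one]
    exact congrFun (derivWithin_const _ _) t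
  | succ k IH =>
    intro e t ht
    rw [iteratedDerivWithin_succ']
    have hEq : EqOn (derivWithin (fun _ : ℝ => e) S12S) (fun _ : ℝ => (0:E)) S12S :=
      fun x hx => congrFun (derivWithin_const _ _) x
    rw [iteratedDerivWithin_congr hEq ht]
    exact IH 0 ht

lemma good12_const (n : ℕ) (e : E) : Good12 n 0 (fun _ : ℝ => e) := by
  refine ⟨contDiffOn_const, ‖e‖, norm_nonneg e, fun i hi t ht => ?_⟩
  cases i with
  | zero => simp [iteratedDerivWithin_zero]
  | succ k =>
    rw [iteratedDerivWithin_const12 k e (s12_mem ht)]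
    simp

lemma good12_id (n : ℕ) : Good12 n (-1) (fun t : ℝ => t) := by
  have hd : EqOn (derivWithin (fun u : ℝ => u) S12S) (fun _ : ℝ => (1:ℝ)) S12S := by
    intro x hx
    rw [derivWithin_of_isOpen s12_open hx]
    exact deriv_id x
  refine ⟨contDiffOn_id, 1, zero_le_one, fun i hi t ht => ?_⟩
  match i with
  | 0 =>
    simp only [iteratedDerivWithin_zero, Real.norm_eq_abs]
    rw [show (-1 : ℤ) + (0:ℕ) = -1 by simp, zpow_neg_one]
    rw [inv_mul_cancel₀ (abs_ne_zero.mpr ht)]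
  | 1 =>
    rw [iteratedDerivWithin_one, hd (s12_mem ht)]
    simp
  | (k+2) =>
    rw [iteratedDerivWithin_succ',
        iteratedDerivWithin_congr hd (s12_mem ht),
        iteratedDerivWithin_const12 k 1 (s12_mem ht)]
    simp

lemma good12_bilin (Bi : E →L[ℝ] F →L[ℝ] G) {n : ℕ} {w₁ w₂ : ℤ} {f : ℝ → E} {g : ℝ → F}
    (hf : Good12 n w₁ f) (hg : Good12 n w₂ g) :
    Good12 n (w₁ + w₂) (fun t => Bi (f t) (g t)) := by
  obtain ⟨hfc, K₁, hK₁0, hK₁⟩ := hf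
  obtain ⟨hgc, K₂, hK₂0, hK₂⟩ := hg
  have hcd : ContDiffOn ℝ (n : ℕ∞) (fun t => Bi (f t) (g t)) {(0:ℝ)}ᶜ :=
    Bi.isBoundedBilinearMap.contDiff.comp_contDiffOn (hfc.prodMk hgc)
  refine ⟨hcd, ‖Bi‖ * (2 ^ n * (K₁ * K₂)), by positivity, fun i hi t ht => ?_⟩
  have habs : (0:ℝ) < |t| := abs_pos.mpr ht
  have hFnorm : ‖iteratedDerivWithin i (fun y => Bi (f y) (g y)) {(0:ℝ)}ᶜ t‖
      ≤ ‖Bi‖ * ∑ j ∈ Finset.range (i + 1), (i.choose j : ℝ) *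
          ‖iteratedDerivWithin j f {(0:ℝ)}ᶜ t‖ * ‖iteratedDerivWithin (i - j) g {(0:ℝ)}ᶜ t‖ := by
    rw [← norm_iteratedFDerivWithin_eq_norm_iteratedDerivWithin]
    have := Bi.norm_iteratedFDerivWithin_le_of_bilinear hfc hgc s12_ud (s12_mem ht)
      (n := i) (by exact_mod_cast hi)
    simpa only [norm_iteratedFDerivWithin_eq_norm_iteratedDerivWithin] using this
  have hterm : ∀ j ∈ Finset.range (i + 1),
      |t| ^ (w₁ + w₂ + (i : ℤ)) * ((i.choose j : ℝ) *
        ‖iteratedDerivWithin j f {(0:ℝ)}ᶜ t‖ * ‖iteratedDerivWithin (i - j) g {(0:ℝ)}ᶜ t‖)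
      ≤ (i.choose j : ℝ) * (K₁ * K₂) := by
    intro j hj
    have hj' : j ≤ i := Nat.lt_succ_iff.mp (Finset.mem_range.mp hj)
    have hsplit : |t| ^ (w₁ + w₂ + (i : ℤ))
        = |t| ^ (w₁ + (j : ℤ)) * |t| ^ (w₂ + ((i - j : ℕ) : ℤ)) := by
      rw [← zpow_add₀ (ne_of_gt habs)]
      congr 1
      have : ((i - j : ℕ) : ℤ) = (i : ℤ) - (j : ℤ) := by
        exact_mod_cast Int.ofNat_sub hj'
      rw [this]; ring
    have h1 := hK₁ j (hj'.trans hi) t ht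
    have h2 := hK₂ (i - j) (le_trans (Nat.sub_le i j) hi) t ht
    have e1 : (0:ℝ) ≤ |t| ^ (w₁ + (j : ℤ)) * ‖iteratedDerivWithin j f {(0:ℝ)}ᶜ t‖ :=
      mul_nonneg (le_of_lt (zpow_pos habs _)) (norm_nonneg _)
    calc |t| ^ (w₁ + w₂ + (i : ℤ)) * ((i.choose j : ℝ) *
          ‖iteratedDerivWithin j f {(0:ℝ)}ᶜ t‖ * ‖iteratedDerivWithin (i - j) g {(0:ℝ)}ᶜ t‖)
        = (i.choose j : ℝ) * ((|t| ^ (w₁ + (j : ℤ)) * ‖iteratedDerivWithin j f {(0:ℝ)}ᶜ t‖) *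
            (|t| ^ (w₂ + ((i - j : ℕ) : ℤ)) * ‖iteratedDerivWithin (i - j) g {(0:ℝ)}ᶜ t‖)) := by
          rw [hsplit]; ring
      _ ≤ (i.choose j : ℝ) * (K₁ * K₂) := by
          apply mul_le_mul_of_nonneg_left _ (Nat.cast_nonneg _)
          exact mul_le_mul h1 h2 (mul_nonneg (le_of_lt (zpow_pos habs _)) (norm_nonneg _)) hK₁0
  have hchoose : ∑ j ∈ Finset.range (i + 1), (i.choose j : ℝ) = (2:ℝ) ^ i := by
    exact_mod_cast congrArg (Nat.cast (R := ℝ)) (Nat.sum_range_choose i)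
  calc |t| ^ (w₁ + w₂ + (i : ℤ)) * ‖iteratedDerivWithin i (fun y => Bi (f y) (g y)) {(0:ℝ)}ᶜ t‖
      ≤ |t| ^ (w₁ + w₂ + (i : ℤ)) * (‖Bi‖ * ∑ j ∈ Finset.range (i + 1), (i.choose j : ℝ) *
          ‖iteratedDerivWithin j f {(0:ℝ)}ᶜ t‖ * ‖iteratedDerivWithin (i - j) g {(0:ℝ)}ᶜ t‖) :=
        mul_le_mul_of_nonneg_left hFnorm (le_of_lt (zpow_pos habs _))
    _ = ‖Bi‖ * ∑ j ∈ Finset.range (i + 1), |t| ^ (w₁ + w₂ + (i : ℤ)) * ((i.choose j : ℝ) *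
          ‖iteratedDerivWithin j f {(0:ℝ)}ᶜ t‖ * ‖iteratedDerivWithin (i - j) g {(0:ℝ)}ᶜ t‖) := by
        rw [mul_left_comm, Finset.mul_sum]
    _ ≤ ‖Bi‖ * ∑ j ∈ Finset.range (i + 1), (i.choose j : ℝ) * (K₁ * K₂) :=
        mul_le_mul_of_nonneg_left (Finset.sum_le_sum hterm) (norm_nonneg Bi)
    _ = ‖Bi‖ * ((2:ℝ) ^ i * (K₁ * K₂)) := by rw [← Finset.sum_mul, hchoose]
    _ ≤ ‖Bi‖ * (2 ^ n * (K₁ * K₂)) := by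
        have h2 : (2:ℝ) ^ i ≤ 2 ^ n := pow_le_pow_right₀ one_le_two hi
        exact mul_le_mul_of_nonneg_left
          (mul_le_mul_of_nonneg_right h2 (mul_nonneg hK₁0 hK₂0)) (norm_nonneg Bi)

lemma Good12.derivWithin_shift {n : ℕ} {w : ℤ} {f : ℝ → E} (h : Good12 (n + 1) w f) :
    Good12 n (w + 1) (derivWithin f S12S) := by
  obtain ⟨hcd, K, hK0, hK⟩ := h
  refine ⟨hcd.derivWithin s12_ud (by exact_mod_cast le_refl (n+1 : ℕ∞)), K, hK0,
    fun i hi t ht => ?_⟩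
  rw [← iteratedDerivWithin_succ']
  have := hK (i + 1) (Nat.succ_le_succ hi) t ht
  have harith : w + 1 + (i : ℤ) = w + ((i + 1 : ℕ) : ℤ) := by push_cast; ring
  rw [harith]
  exact this

lemma Good12.step {n : ℕ} {w : ℤ} {f : ℝ → E} (h1 : Good12 n w f)
    (h2 : Good12 n (w + 1) (derivWithin f S12S))
    (hcd : ContDiffOn ℝ ((n + 1 : ℕ) : ℕ∞) f {(0:ℝ)}ᶜ) : Good12 (n + 1) w f := by
  obtain ⟨_, K₁, hK₁0, hK₁⟩ := h1
  obtain ⟨_, K₂, hK₂0, hK₂⟩ := h2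
  refine ⟨hcd, max K₁ K₂, le_max_of_le_left hK₁0, fun i hi t ht => ?_⟩
  rcases Nat.lt_succ_iff_lt_or_eq.mp (Nat.lt_succ_of_le hi) with hlt | heq
  · exact le_trans (hK₁ i (Nat.lt_succ_iff.mp hlt) t ht) (le_max_left _ _)
  · subst heq
    rw [iteratedDerivWithin_succ']
    have := hK₂ n le_rfl t ht
    have harith : w + ((n + 1 : ℕ) : ℤ) = w + 1 + (n : ℤ) := by push_cast; ring
    rw [harith]
    exact le_trans this (le_max_right _ _)

lemma mihlin_good12 {γ : ℕ} {f : ℝ → E} (h : MihlinCond γ f) : Good12 γ 0 f := by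
  obtain ⟨hcd, K, hK⟩ := h
  refine ⟨hcd, max K 0, le_max_right _ _, fun i hi t ht => ?_⟩
  have h1 := hK i hi t ht
  rw [show (0:ℤ) + (i:ℤ) = (i:ℤ) by ring, zpow_natCast]
  exact le_trans h1 (le_max_left _ _)

lemma good12_mihlin {γ : ℕ} {f : ℝ → E} (h : Good12 γ 0 f) : MihlinCond γ f := by
  obtain ⟨hcd, K, hK0, hK⟩ := h
  refine ⟨hcd, K, fun l hl t ht => ?_⟩
  have h1 := hK l hl t ht
  rwa [show (0:ℤ) + (l:ℤ) = (l:ℤ) by ring, zpow_natCast] at h1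

lemma hasDerivWithinAt_bilin12 (Bi : E →L[ℝ] F →L[ℝ] G) {f : ℝ → E} {g : ℝ → F}
    {f' : E} {g' : F} {s : Set ℝ} {x : ℝ}
    (hf : HasDerivWithinAt f f' s x) (hg : HasDerivWithinAt g g' s x) :
    HasDerivWithinAt (fun t => Bi (f t) (g t)) (Bi f' (g x) + Bi (f x) g') s x :=
  (Bi.hasFDerivAt.comp_hasDerivWithinAt x hf).clm_apply hg

def cmpL12 (E₁ E₂ E₃ : Type*) [NormedAddCommGroup E₁] [NormedSpace ℂ E₁]
    [NormedAddCommGroup E₂] [NormedSpace ℂ E₂] [NormedAddCommGroup E₃] [NormedSpace ℂ E₃] :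
    (E₂ →L[ℂ] E₃) →L[ℝ] (E₁ →L[ℂ] E₂) →L[ℝ] (E₁ →L[ℂ] E₃) :=
  LinearMap.mkContinuous₂
    (LinearMap.mk₂ ℝ (fun f g => f.comp g)
      (fun f f' g => by ext x; simp)
      (fun r f g => by ext x; simp)
      (fun f g g' => by ext x; simp)
      (fun r f g => by ext x; simp))
    1 (fun f g => by simpa [one_mul] using ContinuousLinearMap.opNorm_comp_le f g)

@[simp] lemma cmpL12_apply {E₁ E₂ E₃ : Type*} [NormedAddCommGroup E₁] [NormedSpace ℂ E₁]
    [NormedAddCommGroup E₂] [NormedSpace ℂ E₂] [NormedAddCommGroup E₃] [NormedSpace ℂ E₃]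
    (f : E₂ →L[ℂ] E₃) (g : E₁ →L[ℂ] E₂) : cmpL12 E₁ E₂ E₃ f g = f.comp g := rfl

example : (ContinuousLinearMap.lsmul ℝ ℂ (2:ℂ)) ((3:ℂ)) = (2:ℂ) • 3 := rfl
example : (ContinuousLinearMap.mul ℝ ℝ) (2:ℝ) (3:ℝ) = 6 := by norm_num

lemma good12_sq (n : ℕ) : Good12 n (-2) (fun t : ℝ => t ^ 2) := by
  have h := good12_bilin (ContinuousLinearMap.mul ℝ ℝ) (good12_id n) (good12_id n)
  exact (h.of_eq (by norm_num)).congr fun t _ => (sq t).symm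

end Stmt12Aux
set_option maxHeartbeats 2000000
open Set ContinuousLinearMap

/-- Let `Y ↪ X` be Banach spaces, `A, B, P ∈ L(Y,X)`, `γ ∈ ℕ`, and suppose
`ĉ ∈ C^γ(ℝ∖{0}; L(Y,X))` satisfies the `𝔐_γ`-condition. If `b(t) = −t²P + itB + A + ĉ(t)` is
invertible for `t ≠ 0`, `a = b⁻¹` is bounded in `L(X,Y)`, and `a₀(t) = tBa(t)`,
`a₁(t) = t²Pa(t)` are bounded in `L(X)`, then `a` satisfies the `𝔐_γ`-condition in `L(X,Y)`
and `a₀, a₁` satisfy the `𝔐_γ`-condition in `L(X)`. -/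
theorem statement12 (X Y : Type*)
    [NormedAddCommGroup X] [NormedSpace ℂ X] [CompleteSpace X]
    [NormedAddCommGroup Y] [NormedSpace ℂ Y] [CompleteSpace Y]
    (J : Y →L[ℂ] X) (hJ : Function.Injective J)
    (A B P : Y →L[ℂ] X) (γ : ℕ) (c : ℝ → Y →L[ℂ] X)
    (hc : MihlinCond γ c)
    (a : ℝ → X →L[ℂ] Y)
    (hinv : ∀ t : ℝ, t ≠ 0 →
      ((-(t:ℂ) ^ 2) • P + (Complex.I * (t:ℂ)) • B + A + c t).comp (a t) =
          ContinuousLinearMap.id ℂ X ∧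
        (a t).comp ((-(t:ℂ) ^ 2) • P + (Complex.I * (t:ℂ)) • B + A + c t) =
          ContinuousLinearMap.id ℂ Y)
    (Ka : ℝ)
    (ha : ∀ t : ℝ, t ≠ 0 → ‖a t‖ ≤ Ka)
    (ha0 : ∀ t : ℝ, t ≠ 0 → |t| * ‖B.comp (a t)‖ ≤ Ka)
    (ha1 : ∀ t : ℝ, t ≠ 0 → t ^ 2 * ‖P.comp (a t)‖ ≤ Ka) :
    MihlinCond γ a ∧
    MihlinCond γ (fun t : ℝ => t • (B.comp (a t))) ∧
    MihlinCond γ (fun t : ℝ => (t ^ 2 : ℝ) • (P.comp (a t))) := by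
  classical
  set bf : ℝ → Y →L[ℂ] X :=
    fun t => (-(t:ℂ) ^ 2) • P + (Complex.I * (t:ℂ)) • B + A + c t with hbf
  -- smoothness of `bf`
  have hφ1 : ContDiff ℝ (γ : ℕ∞) (fun t : ℝ => -(t:ℂ) ^ 2) := by
    have h0 : ContDiff ℝ (γ : ℕ∞) (fun t : ℝ => (t:ℂ)) := Complex.ofRealCLM.contDiff
    exact (h0.pow 2).neg
  have hφ2 : ContDiff ℝ (γ : ℕ∞) (fun t : ℝ => Complex.I * (t:ℂ)) := by
    have h0 : ContDiff ℝ (γ : ℕ∞) (fun t : ℝ => (t:ℂ)) := Complex.ofRealCLM.contDiff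
    exact contDiff_const.mul h0
  have hb_cd : ContDiffOn ℝ (γ : ℕ∞) bf {(0:ℝ)}ᶜ := by
    have h1 : ContDiffOn ℝ (γ : ℕ∞) (fun t : ℝ => (-(t:ℂ) ^ 2) • P) {(0:ℝ)}ᶜ := by
      exact (lsmul ℝ ℂ (E := Y →L[ℂ] X)).isBoundedBilinearMap.contDiff.comp_contDiffOn
        (hφ1.contDiffOn.prodMk (contDiffOn_const (c := P)))
    have h2 : ContDiffOn ℝ (γ : ℕ∞) (fun t : ℝ => (Complex.I * (t:ℂ)) • B) {(0:ℝ)}ᶜ := by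
      exact (lsmul ℝ ℂ (E := Y →L[ℂ] X)).isBoundedBilinearMap.contDiff.comp_contDiffOn
        (hφ2.contDiffOn.prodMk (contDiffOn_const (c := B)))
    exact ((h1.add h2).add contDiffOn_const).add hc.1
  -- `a` is the inverse of `bf`
  have hkey : ∀ u : ℝ, u ≠ 0 → a u = ContinuousLinearMap.inverse (bf u) := by
    intro u hu
    obtain ⟨h1, h2⟩ := hinv u hu
    have hL : Function.LeftInverse (a u) (bf u) := fun y => DFunLike.congr_fun h2 y
    have hR : Function.RightInverse (a u) (bf u) := fun x => DFunLike.congr_fun h1 x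
    let e : Y ≃L[ℂ] X := ContinuousLinearEquiv.equivOfInverse (bf u) (a u) hL hR
    have hcoe : (e : Y →L[ℂ] X) = bf u := rfl
    rw [← hcoe, ContinuousLinearMap.inverse_equiv]
    rfl
  have hsmooth_a : ContDiffOn ℝ (γ : ℕ∞) a {(0:ℝ)}ᶜ := by
    intro t ht
    obtain ⟨h1, h2⟩ := hinv t ht
    have hL : Function.LeftInverse (a t) (bf t) := fun y => DFunLike.congr_fun h2 y
    have hR : Function.RightInverse (a t) (bf t) := fun x => DFunLike.congr_fun h1 x
    let e : Y ≃L[ℂ] X := ContinuousLinearEquiv.equivOfInverse (bf t) (a t) hL hR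
    have hbAt : ContDiffAt ℝ (γ : ℕ∞) bf t := hb_cd.contDiffAt (s12_open.mem_nhds ht)
    have hinvAt : ContDiffAt ℝ (γ : ℕ∞)
        (ContinuousLinearMap.inverse : (Y →L[ℂ] X) → (X →L[ℂ] Y)) (bf t) := by
      have h := contDiffAt_map_inverse (𝕜 := ℂ) (n := ((γ : ℕ∞) : WithTop ℕ∞)) e
      exact h.restrict_scalars ℝ
    have hcomp : ContDiffAt ℝ (γ : ℕ∞) (fun u => ContinuousLinearMap.inverse (bf u)) t :=
      hinvAt.comp t hbAt
    have hev : a =ᶠ[nhds t] fun u => ContinuousLinearMap.inverse (bf u) :=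
      Filter.eventually_of_mem (s12_open.mem_nhds ht) (fun u hu => hkey u hu)
    exact (hcomp.congr_of_eventuallyEq hev).contDiffWithinAt
  have hba_cd : ContDiffOn ℝ (γ : ℕ∞) (fun t => B.comp (a t)) {(0:ℝ)}ᶜ :=
    ((cmpL12 X Y X B).contDiff.comp_contDiffOn hsmooth_a : _)
  have hpa_cd : ContDiffOn ℝ (γ : ℕ∞) (fun t => P.comp (a t)) {(0:ℝ)}ᶜ :=
    ((cmpL12 X Y X P).contDiff.comp_contDiffOn hsmooth_a : _)
  have good_c : Good12 γ 0 c := mihlin_good12 hc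
  -- main induction
  have main : ∀ m : ℕ, m ≤ γ → Good12 m 0 a ∧ Good12 m 1 (fun t => B.comp (a t)) ∧
      Good12 m 2 (fun t => P.comp (a t)) := by
    intro m
    induction m with
    | zero =>
      intro _
      refine ⟨⟨hsmooth_a.of_le (by exact_mod_cast Nat.zero_le γ), max Ka 0, le_max_right _ _,
          ?_⟩,
        ⟨hba_cd.of_le (by exact_mod_cast Nat.zero_le γ), max Ka 0, le_max_right _ _, ?_⟩,
        ⟨hpa_cd.of_le (by exact_mod_cast Nat.zero_le γ), max Ka 0, le_max_right _ _, ?_⟩⟩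
      · intro i hi t ht
        obtain rfl : i = 0 := Nat.le_zero.mp hi
        rw [iteratedDerivWithin_zero, show ((0:ℤ) + ((0:ℕ):ℤ)) = 0 by ring, zpow_zero, one_mul]
        exact le_max_of_le_left (ha t ht)
      · intro i hi t ht
        obtain rfl : i = 0 := Nat.le_zero.mp hi
        rw [iteratedDerivWithin_zero, show ((1:ℤ) + ((0:ℕ):ℤ)) = 1 by ring, zpow_one]
        exact le_max_of_le_left (ha0 t ht)
      · intro i hi t ht
        obtain rfl : i = 0 := Nat.le_zero.mp hi
        rw [iteratedDerivWithin_zero, show ((2:ℤ) + ((0:ℕ):ℤ)) = ((2:ℕ):ℤ) by norm_num,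
          zpow_natCast, sq_abs]
        exact le_max_of_le_left (ha1 t ht)
    | succ m IH =>
      intro hm1
      have hmγ : m ≤ γ := le_trans (Nat.le_succ m) hm1
      obtain ⟨gA, gBa, gPa⟩ := IH hmγ
      have h1γ : (1 : WithTop ℕ∞) ≤ ((γ : ℕ∞) : WithTop ℕ∞) := by
        exact_mod_cast le_trans (Nat.succ_le_succ (Nat.zero_le m)) hm1
      have good_c' : Good12 m 1 (derivWithin c {(0:ℝ)}ᶜ) :=
        (((good_c.of_le hm1).derivWithin_shift).of_eq (by norm_num))
      have good_phi : Good12 m (-1) (fun t : ℝ => (-2:ℂ) * (t:ℂ)) := by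
        have h := (good12_id m).clm_left ((-2:ℂ) • Complex.ofRealCLM)
        exact h.congr fun t _ => by simp [smul_eq_mul]
      set Gf : ℝ → X →L[ℂ] X := fun u =>
        ((-2:ℂ) * (u:ℂ)) • (P.comp (a u)) + Complex.I • (B.comp (a u)) +
          (derivWithin c {(0:ℝ)}ᶜ u).comp (a u) with hGf
      have good_G : Good12 m 1 Gf := by
        have g1 : Good12 m 1 (fun u => ((-2:ℂ) * (u:ℂ)) • (P.comp (a u))) := by
          have h := good12_bilin (lsmul ℝ ℂ (E := X →L[ℂ] X)) good_phi gPa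
          exact h.of_eq (by norm_num)
        have g2 : Good12 m 1 (fun u => Complex.I • (B.comp (a u))) :=
          gBa.clm_left (lsmul ℝ ℂ (E := X →L[ℂ] X) Complex.I)
        have g3 : Good12 m 1 (fun u => (derivWithin c {(0:ℝ)}ᶜ u).comp (a u)) := by
          have h := good12_bilin (cmpL12 X Y X) good_c' gA
          exact h.of_eq (by norm_num)
        exact (g1.add g2).add g3
      -- the derivative identity for `a`
      have hderiva : ∀ u ∈ ({(0:ℝ)}ᶜ : Set ℝ),
          derivWithin a {(0:ℝ)}ᶜ u = -((a u).comp (Gf u)) := by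
        intro u hu
        have hu0 : u ≠ 0 := hu
        have hud : UniqueDiffWithinAt ℝ {(0:ℝ)}ᶜ u := s12_ud u hu
        have hdaW : HasDerivWithinAt a (derivWithin a {(0:ℝ)}ᶜ u) {(0:ℝ)}ᶜ u :=
          ((hsmooth_a.differentiableOn (lt_of_lt_of_le zero_lt_one h1γ).ne') u hu).hasDerivWithinAt
        have hφ1W : HasDerivWithinAt (fun v : ℝ => -(v:ℂ) ^ 2) ((-2:ℂ) * (u:ℂ))
            {(0:ℝ)}ᶜ u := by
          have hre : HasDerivWithinAt (fun v : ℝ => -(v ^ 2)) (-(2 * u)) {(0:ℝ)}ᶜ u := by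
            have h := ((hasDerivAt_pow 2 u).hasDerivWithinAt (s := {(0:ℝ)}ᶜ)).neg
            exact h.congr_deriv (by norm_num)
          have h := Complex.ofRealCLM.hasFDerivAt.comp_hasDerivWithinAt u hre
          have h2 : HasDerivWithinAt (fun v : ℝ => -(v:ℂ) ^ 2)
              (Complex.ofRealCLM (-(2 * u))) {(0:ℝ)}ᶜ u :=
            h.congr (fun x _ => by
              simp only [Function.comp_apply, Complex.ofRealCLM_apply]; push_cast; ring)
              (by simp only [Function.comp_apply, Complex.ofRealCLM_apply]; push_cast; ring)
          convert h2 using 1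
          simp only [Complex.ofRealCLM_apply]
          push_cast
          ring
        have hφ2W : HasDerivWithinAt (fun v : ℝ => Complex.I * (v:ℂ)) Complex.I
            {(0:ℝ)}ᶜ u := by
          have h0 : HasDerivWithinAt (fun v : ℝ => (v:ℂ)) 1 {(0:ℝ)}ᶜ u := by
            have h := Complex.ofRealCLM.hasDerivWithinAt (s := {(0:ℝ)}ᶜ) (x := u)
            rw [show Complex.ofRealCLM (1:ℝ) = (1:ℂ) by simp] at h
            exact h
          have h := h0.const_mul Complex.I
          simpa using h
        have hsm1 : HasDerivWithinAt (fun v : ℝ => (-(v:ℂ) ^ 2) • P)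
            (((-2:ℂ) * (u:ℂ)) • P) {(0:ℝ)}ᶜ u := by
          have h := hasDerivWithinAt_bilin12 (lsmul ℝ ℂ (E := Y →L[ℂ] X)) hφ1W
            (hasDerivWithinAt_const u {(0:ℝ)}ᶜ P)
          have e : (lsmul ℝ ℂ (E := Y →L[ℂ] X)) ((-2:ℂ) * (u:ℂ)) P
              + (lsmul ℝ ℂ (E := Y →L[ℂ] X)) (-(u:ℂ) ^ 2) 0 = ((-2:ℂ) * (u:ℂ)) • P := by
            rw [map_zero, add_zero]; rfl
          rw [← e]
          exact h
        have hsm2 : HasDerivWithinAt (fun v : ℝ => (Complex.I * (v:ℂ)) • B)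
            (Complex.I • B) {(0:ℝ)}ᶜ u := by
          have h := hasDerivWithinAt_bilin12 (lsmul ℝ ℂ (E := Y →L[ℂ] X)) hφ2W
            (hasDerivWithinAt_const u {(0:ℝ)}ᶜ B)
          have e : (lsmul ℝ ℂ (E := Y →L[ℂ] X)) Complex.I B
              + (lsmul ℝ ℂ (E := Y →L[ℂ] X)) (Complex.I * (u:ℂ)) 0 = Complex.I • B := by
            rw [map_zero, add_zero]; rfl
          rw [← e]
          exact h
        have hcW : HasDerivWithinAt c (derivWithin c {(0:ℝ)}ᶜ u) {(0:ℝ)}ᶜ u :=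
          ((hc.1.differentiableOn (lt_of_lt_of_le zero_lt_one h1γ).ne') u hu).hasDerivWithinAt
        have hbW : HasDerivWithinAt bf
            ((((-2:ℂ) * (u:ℂ)) • P + Complex.I • B) + derivWithin c {(0:ℝ)}ᶜ u)
            {(0:ℝ)}ᶜ u := by
          have h := ((hsm1.add hsm2).add (hasDerivWithinAt_const u {(0:ℝ)}ᶜ A)).add hcW
          have e : ((((-2:ℂ) * (u:ℂ)) • P + Complex.I • B) + 0) + derivWithin c {(0:ℝ)}ᶜ u
              = (((-2:ℂ) * (u:ℂ)) • P + Complex.I • B) + derivWithin c {(0:ℝ)}ᶜ u := by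
            rw [add_zero]
          rw [← e]
          exact h
        have hFW := hasDerivWithinAt_bilin12 (cmpL12 Y X Y) hdaW hbW
        have hF0 : HasDerivWithinAt (fun v => (cmpL12 Y X Y) (a v) (bf v)) 0 {(0:ℝ)}ᶜ u := by
          have hcst : HasDerivWithinAt (fun _ : ℝ => ContinuousLinearMap.id ℂ Y) 0
              {(0:ℝ)}ᶜ u := hasDerivWithinAt_const u {(0:ℝ)}ᶜ _
          exact hcst.congr (fun v hv => (hinv v hv).2) ((hinv u hu0).2)
        have heq0 : (cmpL12 Y X Y) (derivWithin a {(0:ℝ)}ᶜ u) (bf u) +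
            (cmpL12 Y X Y) (a u)
              ((((-2:ℂ) * (u:ℂ)) • P + Complex.I • B) + derivWithin c {(0:ℝ)}ᶜ u) = 0 :=
          (hFW.derivWithin hud).symm.trans (hF0.derivWithin hud)
        obtain ⟨hinv1, hinv2⟩ := hinv u hu0
        have h3 : (derivWithin a {(0:ℝ)}ᶜ u).comp (bf u)
            = -((a u).comp ((((-2:ℂ) * (u:ℂ)) • P + Complex.I • B) +
                derivWithin c {(0:ℝ)}ᶜ u)) := by
          simp only [cmpL12_apply] at heq0
          exact eq_neg_of_add_eq_zero_left heq0
        have h4 : derivWithin a {(0:ℝ)}ᶜ u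
            = ((derivWithin a {(0:ℝ)}ᶜ u).comp (bf u)).comp (a u) := by
          rw [ContinuousLinearMap.comp_assoc, hinv1, ContinuousLinearMap.comp_id]
        rw [h4, h3, ContinuousLinearMap.neg_comp]
        congr 1
      have good_da : Good12 m 1 (derivWithin a {(0:ℝ)}ᶜ) := by
        have h := (good12_bilin (cmpL12 X X Y) gA good_G).neg
        exact (h.of_eq (by norm_num)).congr fun u hu => by rw [hderiva u hu]; rfl
      have good_a' : Good12 (m+1) 0 a :=
        gA.step (good_da.of_eq (by norm_num)) (hsmooth_a.of_le (by exact_mod_cast hm1))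
      -- derivative identity for `B ∘ a` and `P ∘ a`
      have hderivba : ∀ u ∈ ({(0:ℝ)}ᶜ : Set ℝ),
          derivWithin (fun t => B.comp (a t)) {(0:ℝ)}ᶜ u
            = -((B.comp (a u)).comp (Gf u)) := by
        intro u hu
        have hud : UniqueDiffWithinAt ℝ {(0:ℝ)}ᶜ u := s12_ud u hu
        have hdaW : HasDerivWithinAt a (derivWithin a {(0:ℝ)}ᶜ u) {(0:ℝ)}ᶜ u :=
          ((hsmooth_a.differentiableOn (lt_of_lt_of_le zero_lt_one h1γ).ne') u hu).hasDerivWithinAt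
        have hW : HasDerivWithinAt (fun t => B.comp (a t))
            (B.comp (derivWithin a {(0:ℝ)}ᶜ u)) {(0:ℝ)}ᶜ u :=
          (cmpL12 X Y X B).hasFDerivAt.comp_hasDerivWithinAt u hdaW
        calc derivWithin (fun t => B.comp (a t)) {(0:ℝ)}ᶜ u
            = B.comp (derivWithin a {(0:ℝ)}ᶜ u) := hW.derivWithin hud
          _ = B.comp (-((a u).comp (Gf u))) := by rw [hderiva u hu]
          _ = -((B.comp (a u)).comp (Gf u)) := by
              rw [ContinuousLinearMap.comp_neg, ← ContinuousLinearMap.comp_assoc]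
      have good_dba : Good12 m 2 (derivWithin (fun t => B.comp (a t)) {(0:ℝ)}ᶜ) := by
        have h := (good12_bilin (cmpL12 X X X) gBa good_G).neg
        exact (h.of_eq (by norm_num)).congr fun u hu => by rw [hderivba u hu]; rfl
      have good_ba' : Good12 (m+1) 1 (fun t => B.comp (a t)) :=
        gBa.step (good_dba.of_eq (by norm_num)) (hba_cd.of_le (by exact_mod_cast hm1))
      have hderivpa : ∀ u ∈ ({(0:ℝ)}ᶜ : Set ℝ),
          derivWithin (fun t => P.comp (a t)) {(0:ℝ)}ᶜ u
            = -((P.comp (a u)).comp (Gf u)) := by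
        intro u hu
        have hud : UniqueDiffWithinAt ℝ {(0:ℝ)}ᶜ u := s12_ud u hu
        have hdaW : HasDerivWithinAt a (derivWithin a {(0:ℝ)}ᶜ u) {(0:ℝ)}ᶜ u :=
          ((hsmooth_a.differentiableOn (lt_of_lt_of_le zero_lt_one h1γ).ne') u hu).hasDerivWithinAt
        have hW : HasDerivWithinAt (fun t => P.comp (a t))
            (P.comp (derivWithin a {(0:ℝ)}ᶜ u)) {(0:ℝ)}ᶜ u :=
          (cmpL12 X Y X P).hasFDerivAt.comp_hasDerivWithinAt u hdaW
        calc derivWithin (fun t => P.comp (a t)) {(0:ℝ)}ᶜ u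
            = P.comp (derivWithin a {(0:ℝ)}ᶜ u) := hW.derivWithin hud
          _ = P.comp (-((a u).comp (Gf u))) := by rw [hderiva u hu]
          _ = -((P.comp (a u)).comp (Gf u)) := by
              rw [ContinuousLinearMap.comp_neg, ← ContinuousLinearMap.comp_assoc]
      have good_dpa : Good12 m 3 (derivWithin (fun t => P.comp (a t)) {(0:ℝ)}ᶜ) := by
        have h := (good12_bilin (cmpL12 X X X) gPa good_G).neg
        exact (h.of_eq (by norm_num)).congr fun u hu => by rw [hderivpa u hu]; rfl
      have good_pa' : Good12 (m+1) 2 (fun t => P.comp (a t)) :=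
        gPa.step (good_dpa.of_eq (by norm_num)) (hpa_cd.of_le (by exact_mod_cast hm1))
      exact ⟨good_a', good_ba', good_pa'⟩
  obtain ⟨gA, gBa, gPa⟩ := main γ le_rfl
  refine ⟨good12_mihlin gA, ?_, ?_⟩
  · apply good12_mihlin
    have h := good12_bilin (lsmul ℝ ℝ (E := X →L[ℂ] X)) (good12_id γ) gBa
    exact h.of_eq (by norm_num)
  · apply good12_mihlin
    have h := good12_bilin (lsmul ℝ ℝ (E := X →L[ℂ] X)) (good12_sq γ) gPa
    exact h.of_eq (by norm_num)
end
end
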